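/- arXiv:math/0508042 — 10 statements merged into one kernel-verified Lean document; each statement's English description precedes it below -/
import Mathlib

section
/- Let N₁(n) denote the number of ones and N₀(n) the number of zeros in the binary expansion of the positive integer n. Then Euler's constant γ satisfies γ = Σ_{n=2}^∞ (-1)^n · (N₁(⌊n/2⌋) + N₀(⌊n/2⌋))/n, where the series converges. -/
open Real Filter

/-- Number of ones in the binary expansion of `n`. -/
def N1 (n : ℕ) : ℕ := (Nat.digits 2 n).count 1

/-- Number of zeros in the binary expansion of `n`. -/
def N0 (n : ℕ) : ℕ := (Nat.digits 2 n).count 0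

/-- Partial sums of the alternating harmonic series (with sign `(-1)^n`). -/
noncomputable def Av (m : ℕ) : ℝ := ∑ n ∈ Finset.range (m + 1), (-1 : ℝ) ^ n / n

lemma Av_succ (m : ℕ) : Av (m + 1) = Av m + (-1 : ℝ) ^ (m + 1) / (m + 1) := by
  simp only [Av, Finset.sum_range_succ]
  push_cast
  ring

lemma count_zero_add_count_one (l : List ℕ) (h : ∀ x ∈ l, x < 2) :
    l.count 1 + l.count 0 = l.length := by
  induction l with
  | nil => simp
  | cons a t ih =>
    have ha : a < 2 := h a (by simp)
    have ht : ∀ x ∈ t, x < 2 := fun x hx => h x (by simp [hx])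
    have := ih ht
    interval_cases a <;> simp [List.count_cons, this] <;> omega

lemma term_eq_log {n : ℕ} (hn : 2 ≤ n) : N1 (n / 2) + N0 (n / 2) = Nat.log 2 n := by
  have hm : n / 2 ≠ 0 := by omega
  have h1 : N1 (n / 2) + N0 (n / 2) = (Nat.digits 2 (n / 2)).length :=
    count_zero_add_count_one _ (fun x hx => Nat.digits_lt_base (by norm_num) hx)
  have h2 : (Nat.digits 2 (n / 2)).length = Nat.log 2 (n / 2) + 1 :=
    Nat.digits_len 2 _ (by norm_num) hm
  have h3 : Nat.log 2 (n / 2) = Nat.log 2 n - 1 := Nat.log_div_base 2 n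
  have h4 : 1 ≤ Nat.log 2 n :=
    (Nat.le_log_iff_pow_le one_lt_two (by omega : n ≠ 0)).2 (by simpa using hn)
  omega

lemma Av_even (m : ℕ) : Av (2 * m) = ((harmonic m : ℝ)) - ((harmonic (2 * m) : ℝ)) := by
  induction m with
  | zero => simp [Av]
  | succ m ih =>
    have h2 : 2 * (m + 1) = (2 * m + 1) + 1 := by ring
    rw [h2, Av_succ, Av_succ, ih]
    have ho : (-1 : ℝ) ^ (2 * m + 1) = -1 := Odd.neg_one_pow ⟨m, by ring⟩
    have he : (-1 : ℝ) ^ (2 * m + 1 + 1) = 1 := Even.neg_one_pow ⟨m + 1, by ring⟩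
    rw [ho, he]
    have hh1 : (harmonic (m + 1) : ℝ) = (harmonic m : ℝ) + ((m : ℝ) + 1)⁻¹ := by
      rw [harmonic_succ]; push_cast; ring
    have hh2 : (harmonic (2 * m + 1 + 1) : ℝ) = (harmonic (2 * m) : ℝ)
        + ((2 * (m : ℝ)) + 1)⁻¹ + ((2 * (m : ℝ)) + 2)⁻¹ := by
      have e1 : 2 * m + 1 + 1 = (2 * m + 1) + 1 := rfl
      rw [e1, harmonic_succ, harmonic_succ]; push_cast; ring
    rw [hh1, hh2]
    have hm1 : ((m : ℝ) + 1) ≠ 0 := by positivity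
    have hm2 : (2 * (m : ℝ) + 1) ≠ 0 := by positivity
    have hm3 : (2 * (m : ℝ) + 2) ≠ 0 := by positivity
    push_cast
    field_simp
    ring

lemma Av_pow_pred (i : ℕ) :
    Av (2 ^ (i + 1) - 1) = ((harmonic (2 ^ i) : ℝ)) - ((harmonic (2 ^ (i + 1)) : ℝ))
      - ((2 : ℝ) ^ (i + 1))⁻¹ := by
  have hp : 1 ≤ 2 ^ (i + 1) := Nat.one_le_two_pow
  have hsucc : 2 ^ (i + 1) - 1 + 1 = 2 ^ (i + 1) := by omega
  have h1 := Av_succ (2 ^ (i + 1) - 1)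
  rw [hsucc] at h1
  have hden : ((2 ^ (i + 1) - 1 : ℕ) : ℝ) + 1 = (2 : ℝ) ^ (i + 1) := by
    rw [Nat.cast_sub hp]
    push_cast
    ring
  rw [hden] at h1
  have he : (-1 : ℝ) ^ (2 ^ (i + 1)) = 1 := Even.neg_one_pow ⟨2 ^ i, by ring⟩
  rw [he] at h1
  have h2 : Av (2 ^ (i + 1)) = (harmonic (2 ^ i) : ℝ) - (harmonic (2 ^ (i + 1)) : ℝ) := by
    have : (2 : ℕ) ^ (i + 1) = 2 * 2 ^ i := by ring
    rw [this, Av_even, ← this]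
  rw [h2] at h1
  have hone : (1 : ℝ) / (2 : ℝ) ^ (i + 1) = ((2 : ℝ) ^ (i + 1))⁻¹ := one_div _
  linarith [h1]

/-- The closed form for the partial sums of Vacca's series. -/
lemma closed_form {N : ℕ} (hN : 2 ≤ N) :
    ∑ n ∈ Finset.Icc 2 N, (-1 : ℝ) ^ n * (Nat.log 2 n : ℝ) / n
      = (Nat.log 2 N : ℝ) * Av N + ((harmonic (2 ^ Nat.log 2 N) : ℝ))
        - ((2 : ℝ) ^ Nat.log 2 N)⁻¹ := by
  set k := Nat.log 2 N with hk
  have hNne : N ≠ 0 := by omega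
  have hk1 : 1 ≤ k := (Nat.le_log_iff_pow_le one_lt_two hNne).2 (by simpa using hN)
  -- step 1 : rewrite log as indicator sum
  have step1 : ∀ n ∈ Finset.Icc 2 N,
      (-1 : ℝ) ^ n * (Nat.log 2 n : ℝ) / n
        = ∑ j ∈ Finset.Icc 1 k, (if 2 ^ j ≤ n then (-1 : ℝ) ^ n / n else 0) := by
    intro n hn
    rw [Finset.mem_Icc] at hn
    have hnne : n ≠ 0 := by omega
    have hfil : (Finset.Icc 1 k).filter (fun j => 2 ^ j ≤ n) = Finset.Icc 1 (Nat.log 2 n) := by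
      ext j
      simp only [Finset.mem_filter, Finset.mem_Icc]
      constructor
      · rintro ⟨⟨h1, _⟩, h3⟩
        exact ⟨h1, (Nat.le_log_iff_pow_le one_lt_two hnne).2 h3⟩
      · rintro ⟨h1, h2⟩
        have hle : Nat.log 2 n ≤ k := Nat.log_mono_right hn.2
        exact ⟨⟨h1, h2.trans hle⟩, (Nat.le_log_iff_pow_le one_lt_two hnne).1 h2⟩
    have hcard : ((Finset.Icc 1 k).filter (fun j => 2 ^ j ≤ n)).card = Nat.log 2 n := by
      rw [hfil, Nat.card_Icc]; omega
    calc (-1 : ℝ) ^ n * (Nat.log 2 n : ℝ) / n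
        = (((Finset.Icc 1 k).filter (fun j => 2 ^ j ≤ n)).card : ℝ) * ((-1 : ℝ) ^ n / n) := by
          rw [hcard]; ring
      _ = ∑ j ∈ (Finset.Icc 1 k).filter (fun j => 2 ^ j ≤ n), ((-1 : ℝ) ^ n / n) := by
          rw [Finset.sum_const, nsmul_eq_mul]
      _ = ∑ j ∈ Finset.Icc 1 k, (if 2 ^ j ≤ n then (-1 : ℝ) ^ n / n else 0) := by
          rw [Finset.sum_filter]
  rw [Finset.sum_congr rfl step1, Finset.sum_comm]
  -- step 2 : inner sum over n
  have step2 : ∀ j ∈ Finset.Icc 1 k,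
      (∑ n ∈ Finset.Icc 2 N, if 2 ^ j ≤ n then (-1 : ℝ) ^ n / n else 0)
        = Av N - Av (2 ^ j - 1) := by
    intro j hj
    rw [Finset.mem_Icc] at hj
    have h2j : 2 ≤ 2 ^ j := by
      calc 2 = 2 ^ 1 := rfl
        _ ≤ 2 ^ j := Nat.pow_le_pow_right (by norm_num) hj.1
    have hjN : 2 ^ j ≤ N := le_trans (Nat.pow_le_pow_right (by norm_num) hj.2)
      (Nat.pow_log_le_self 2 hNne)
    have hfil : (Finset.Icc 2 N).filter (fun n => 2 ^ j ≤ n) = Finset.Icc (2 ^ j) N := by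
      ext n
      simp only [Finset.mem_filter, Finset.mem_Icc]
      omega
    rw [← Finset.sum_filter, hfil]
    have hIco : Finset.Icc (2 ^ j) N = Finset.Ico (2 ^ j) (N + 1) := by
      rw [Finset.Ico_add_one_right_eq_Icc]
    rw [hIco, Finset.sum_Ico_eq_sub _ (by omega)]
    have hpred : 2 ^ j - 1 + 1 = 2 ^ j := by omega
    rw [Av, Av, hpred]
  rw [Finset.sum_congr rfl step2, Finset.sum_sub_distrib, Finset.sum_const, Nat.card_Icc]
  have hcard : k + 1 - 1 = k := by omega
  rw [hcard, nsmul_eq_mul]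
  -- step 3 : evaluate ∑_{j=1}^k Av (2^j - 1)
  have step3 : ∑ j ∈ Finset.Icc 1 k, Av (2 ^ j - 1)
      = ((2 : ℝ) ^ k)⁻¹ - ((harmonic (2 ^ k) : ℝ)) := by
    have hshift : ∑ j ∈ Finset.Icc 1 k, Av (2 ^ j - 1)
        = ∑ i ∈ Finset.range k, Av (2 ^ (i + 1) - 1) := by
      rw [← Finset.Ico_add_one_right_eq_Icc, Finset.sum_Ico_eq_sum_range]
      simp [add_comm]
    rw [hshift]
    have : ∀ i ∈ Finset.range k, Av (2 ^ (i + 1) - 1)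
        = ((harmonic (2 ^ i) : ℝ) - (harmonic (2 ^ (i + 1)) : ℝ))
          - (((2 : ℝ) ^ i)⁻¹ - ((2 : ℝ) ^ (i + 1))⁻¹) := by
      intro i _
      rw [Av_pow_pred]
      have h2i : ((2 : ℝ) ^ i)⁻¹ - ((2 : ℝ) ^ (i + 1))⁻¹ = ((2 : ℝ) ^ (i + 1))⁻¹ := by
        have hp : (2 : ℝ) ^ i ≠ 0 := by positivity
        rw [pow_succ]
        field_simp
        ring
      rw [h2i]
    rw [Finset.sum_congr rfl this, Finset.sum_sub_distrib]
    have t1 : ∑ i ∈ Finset.range k, ((harmonic (2 ^ i) : ℝ) - (harmonic (2 ^ (i + 1)) : ℝ))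
        = (harmonic (2 ^ 0) : ℝ) - (harmonic (2 ^ k) : ℝ) :=
      Finset.sum_range_sub' (fun i => (harmonic (2 ^ i) : ℝ)) k
    have t2 : ∑ i ∈ Finset.range k, (((2 : ℝ) ^ i)⁻¹ - ((2 : ℝ) ^ (i + 1))⁻¹)
        = ((2 : ℝ) ^ 0)⁻¹ - ((2 : ℝ) ^ k)⁻¹ :=
      Finset.sum_range_sub' (fun i => ((2 : ℝ) ^ i)⁻¹) k
    rw [t1, t2]
    norm_num [harmonic_succ]
  rw [step3]
  ring

lemma seq'_sub_gamma_le {n : ℕ} (hn : 1 ≤ n) :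
    |Real.eulerMascheroniSeq' n - Real.eulerMascheroniConstant| ≤ 1 / n := by
  have hlow : Real.eulerMascheroniConstant < Real.eulerMascheroniSeq' n :=
    Real.eulerMascheroniConstant_lt_eulerMascheroniSeq' n
  have hup : Real.eulerMascheroniSeq n < Real.eulerMascheroniConstant :=
    Real.eulerMascheroniSeq_lt_eulerMascheroniConstant n
  have hne : n ≠ 0 := by omega
  have hnp : (0 : ℝ) < n := by positivity
  have hdiff : Real.eulerMascheroniSeq' n - Real.eulerMascheroniSeq n
      = Real.log ((n + 1) / n) := by
    rw [Real.eulerMascheroniSeq', Real.eulerMascheroniSeq, if_neg hne,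
      Real.log_div (by positivity) (by positivity)]
    ring
  have hlog : Real.log (((n : ℝ) + 1) / n) ≤ 1 / n := by
    have h1 : ((n : ℝ) + 1) / n - 1 = 1 / n := by field_simp; ring
    have := Real.log_le_sub_one_of_pos (x := ((n : ℝ) + 1) / n) (by positivity)
    linarith
  rw [abs_of_pos (by linarith)]
  linarith

lemma Av_add_log_two_even {m : ℕ} (hm : 1 ≤ m) :
    Av (2 * m) + Real.log 2
      = Real.eulerMascheroniSeq' m - Real.eulerMascheroniSeq' (2 * m) := by
  have hmne : m ≠ 0 := by omega
  have h2mne : 2 * m ≠ 0 := by omega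
  rw [Av_even, Real.eulerMascheroniSeq', Real.eulerMascheroniSeq', if_neg hmne, if_neg h2mne]
  have hc : ((2 * m : ℕ) : ℝ) = 2 * (m : ℝ) := by push_cast; ring
  rw [hc, Real.log_mul (by norm_num) (by positivity)]
  ring

lemma Av_bound {N : ℕ} (hN : 2 ≤ N) : |Av N + Real.log 2| ≤ 7 / N := by
  rcases Nat.even_or_odd N with ⟨m, hm⟩ | ⟨m, hm⟩
  · -- N = m + m
    have hmN : N = 2 * m := by omega
    have hm1 : 1 ≤ m := by omega
    subst hmN
    rw [Av_add_log_two_even hm1]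
    have b1 := seq'_sub_gamma_le hm1
    have b2 := seq'_sub_gamma_le (show 1 ≤ 2 * m by omega)
    have hc : ((2 * m : ℕ) : ℝ) = 2 * (m : ℝ) := by push_cast; ring
    rw [hc] at b2 ⊢
    have hmp : (0 : ℝ) < m := by positivity
    calc |Real.eulerMascheroniSeq' m - Real.eulerMascheroniSeq' (2 * m)|
        ≤ |Real.eulerMascheroniSeq' m - Real.eulerMascheroniConstant|
          + |Real.eulerMascheroniSeq' (2 * m) - Real.eulerMascheroniConstant| := by
          rw [show Real.eulerMascheroniSeq' m - Real.eulerMascheroniSeq' (2 * m)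
            = (Real.eulerMascheroniSeq' m - Real.eulerMascheroniConstant)
              - (Real.eulerMascheroniSeq' (2 * m) - Real.eulerMascheroniConstant) by ring]
          exact abs_sub _ _
      _ ≤ 1 / m + 1 / (2 * m) := add_le_add b1 b2
      _ ≤ 7 / (2 * m) := by rw [div_add_div _ _ (by positivity) (by positivity)]
                            rw [div_le_div_iff₀ (by positivity) (by positivity)]
                            nlinarith [hm1, hmp]
  · -- N = 2 * m + 1
    have hm1 : 1 ≤ m := by omega
    have hsplit : Av N = Av (2 * m) + (-1 : ℝ) ^ (2 * m + 1) / (2 * m + 1) := by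
      rw [hm, Av_succ]; push_cast; ring_nf
    have ho : (-1 : ℝ) ^ (2 * m + 1) = -1 := Odd.neg_one_pow ⟨m, by ring⟩
    rw [hsplit, ho]
    have b0 : |Av (2 * m) + Real.log 2| ≤ 3 / (2 * (m : ℝ)) := by
      rw [Av_add_log_two_even hm1]
      have b1 := seq'_sub_gamma_le hm1
      have b2 := seq'_sub_gamma_le (show 1 ≤ 2 * m by omega)
      have hc : ((2 * m : ℕ) : ℝ) = 2 * (m : ℝ) := by push_cast; ring
      rw [hc] at b2
      have hmp : (0 : ℝ) < m := by positivity
      calc |Real.eulerMascheroniSeq' m - Real.eulerMascheroniSeq' (2 * m)|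
          ≤ |Real.eulerMascheroniSeq' m - Real.eulerMascheroniConstant|
            + |Real.eulerMascheroniSeq' (2 * m) - Real.eulerMascheroniConstant| := by
            rw [show Real.eulerMascheroniSeq' m - Real.eulerMascheroniSeq' (2 * m)
              = (Real.eulerMascheroniSeq' m - Real.eulerMascheroniConstant)
                - (Real.eulerMascheroniSeq' (2 * m) - Real.eulerMascheroniConstant) by ring]
            exact abs_sub _ _
        _ ≤ 1 / m + 1 / (2 * m) := add_le_add b1 b2
        _ ≤ 3 / (2 * m) := by rw [div_add_div _ _ (by positivity) (by positivity)]
                              rw [div_le_div_iff₀ (by positivity) (by positivity)]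
                              nlinarith [hmp]
    have hmp : (0 : ℝ) < m := by positivity
    have hNc : (N : ℝ) = 2 * (m : ℝ) + 1 := by rw [hm]; push_cast; ring
    rw [hNc]
    have hre : Av (2 * m) + -1 / (2 * (m : ℝ) + 1) + Real.log 2
        = (Av (2 * m) + Real.log 2) + (-1 / (2 * (m : ℝ) + 1)) := by ring
    calc |Av (2 * m) + -1 / (2 * (m : ℝ) + 1) + Real.log 2|
        ≤ |Av (2 * m) + Real.log 2| + |(-1 : ℝ) / (2 * (m : ℝ) + 1)| := by
          rw [hre]
          exact abs_add_le _ _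
      _ ≤ 3 / (2 * (m : ℝ)) + 1 / (2 * (m : ℝ) + 1) := by
          refine add_le_add b0 ?_
          rw [abs_div, abs_neg, abs_one, abs_of_pos (by positivity)]
      _ ≤ 7 / (2 * (m : ℝ) + 1) := by
          rw [div_add_div _ _ (by positivity) (by positivity)]
          rw [div_le_div_iff₀ (by positivity) (by positivity)]
          have hm1' : (1 : ℝ) ≤ m := by exact_mod_cast hm1
          nlinarith [hm1', hmp]

lemma tendsto_nat_log_two_atTop : Tendsto (fun N => Nat.log 2 N) atTop atTop := by
  refine tendsto_atTop_atTop.2 fun b => ⟨2 ^ b, fun N hN => ?_⟩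
  have hNne : N ≠ 0 := by
    have : 1 ≤ 2 ^ b := Nat.one_le_two_pow
    omega
  exact (Nat.le_log_iff_pow_le one_lt_two hNne).2 hN

/-- Vacca's series: `γ = ∑_{n=2}^∞ (-1)^n (N₁(⌊n/2⌋) + N₀(⌊n/2⌋)) / n`. -/
theorem gamma_eq_vacca_series :
    Tendsto (fun N : ℕ => ∑ n ∈ Finset.Icc 2 N,
        (-1 : ℝ) ^ n * ((N1 (n / 2) + N0 (n / 2) : ℕ) : ℝ) / n)
      atTop (nhds Real.eulerMascheroniConstant) := by
  have hterm : ∀ N : ℕ, (∑ n ∈ Finset.Icc 2 N,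
      (-1 : ℝ) ^ n * ((N1 (n / 2) + N0 (n / 2) : ℕ) : ℝ) / n)
        = ∑ n ∈ Finset.Icc 2 N, (-1 : ℝ) ^ n * (Nat.log 2 n : ℝ) / n := by
    intro N
    refine Finset.sum_congr rfl fun n hn => ?_
    rw [Finset.mem_Icc] at hn
    rw [term_eq_log hn.1]
  simp only [hterm]
  -- the limit of the closed form
  set T : ℕ → ℝ := fun N => (Nat.log 2 N : ℝ) * (Av N + Real.log 2)
    + Real.eulerMascheroniSeq' (2 ^ Nat.log 2 N) - ((2 : ℝ) ^ Nat.log 2 N)⁻¹ with hT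
  have hTlim : Tendsto T atTop (nhds Real.eulerMascheroniConstant) := by
    have hlog := tendsto_nat_log_two_atTop
    have hu : Tendsto (fun N : ℕ => (Nat.log 2 N : ℝ) * (Av N + Real.log 2)) atTop (nhds 0) := by
      apply squeeze_zero_norm' (a := fun N : ℕ =>
        7 * ((Nat.log 2 N : ℝ) * (1 / 2) ^ (Nat.log 2 N)))
      · filter_upwards [eventually_ge_atTop 2] with N hN
        have hNne : N ≠ 0 := by omega
        have hpow : (2 : ℕ) ^ Nat.log 2 N ≤ N := Nat.pow_log_le_self 2 hNne
        have hpowR : (2 : ℝ) ^ Nat.log 2 N ≤ (N : ℝ) := by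
          calc (2 : ℝ) ^ Nat.log 2 N = ((2 ^ Nat.log 2 N : ℕ) : ℝ) := by push_cast; ring
            _ ≤ (N : ℝ) := by exact_mod_cast hpow
        have h1 : |Av N + Real.log 2| ≤ 7 / N := Av_bound hN
        have h2 : 7 / (N : ℝ) ≤ 7 / (2 : ℝ) ^ Nat.log 2 N := by
          apply div_le_div_of_nonneg_left (by norm_num) (by positivity) hpowR
        rw [Real.norm_eq_abs, abs_mul, abs_of_nonneg (by positivity : (0:ℝ) ≤ (Nat.log 2 N : ℝ))]
        calc (Nat.log 2 N : ℝ) * |Av N + Real.log 2|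
            ≤ (Nat.log 2 N : ℝ) * (7 / (2 : ℝ) ^ Nat.log 2 N) := by
              exact mul_le_mul_of_nonneg_left (h1.trans h2) (by positivity)
          _ = 7 * ((Nat.log 2 N : ℝ) * (1 / 2) ^ (Nat.log 2 N)) := by
              rw [div_pow, one_pow]
              field_simp
      · have hbase : Tendsto (fun k : ℕ => (k : ℝ) * (1 / 2) ^ k) atTop (nhds 0) :=
          tendsto_self_mul_const_pow_of_lt_one (by norm_num) (by norm_num)
        have := (hbase.comp hlog).const_mul (7 : ℝ)
        simpa using this
    have hv : Tendsto (fun N : ℕ => Real.eulerMascheroniSeq' (2 ^ Nat.log 2 N)) atTop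
        (nhds Real.eulerMascheroniConstant) := by
      have hpow : Tendsto (fun k : ℕ => 2 ^ k) atTop atTop :=
        tendsto_pow_atTop_atTop_of_one_lt one_lt_two
      exact Real.tendsto_eulerMascheroniSeq'.comp (hpow.comp hlog)
    have hw : Tendsto (fun N : ℕ => ((2 : ℝ) ^ Nat.log 2 N)⁻¹) atTop (nhds 0) := by
      have hpow : Tendsto (fun k : ℕ => (2 : ℝ) ^ k) atTop atTop :=
        tendsto_pow_atTop_atTop_of_one_lt (by norm_num)
      exact (tendsto_inv_atTop_zero.comp (hpow.comp hlog))
    have := (hu.add hv).sub hw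
    simpa using this
  refine hTlim.congr' ?_
  filter_upwards [eventually_ge_atTop 2] with N hN
  simp only [hT]
  rw [closed_form hN]
  have hNne : N ≠ 0 := by omega
  have hlogpow : Real.log ((2 : ℝ) ^ Nat.log 2 N) = (Nat.log 2 N : ℝ) * Real.log 2 :=
    Real.log_pow _ _
  have hseq : Real.eulerMascheroniSeq' (2 ^ Nat.log 2 N)
      = (harmonic (2 ^ Nat.log 2 N) : ℝ) - (Nat.log 2 N : ℝ) * Real.log 2 := by
    rw [Real.eulerMascheroniSeq', if_neg (by positivity)]
    have hc : ((2 ^ Nat.log 2 N : ℕ) : ℝ) = (2 : ℝ) ^ Nat.log 2 N := by push_cast; ring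
    rw [hc, hlogpow]
  rw [hseq]
  ring
end

section
/- Let N₁(n) denote the number of ones and N₀(n) the number of zeros in the binary expansion of the positive integer n. Then Euler's constant γ satisfies γ = Σ_{n=1}^∞ (N₁(n) + N₀(n)) / (2n(2n+1)). -/
open Real Finset Filter Topology

lemma count_len (l : List ℕ) (hl : ∀ x ∈ l, x < 2) : l.count 1 + l.count 0 = l.length := by
  induction l with
  | nil => simp
  | cons a t ih =>
    have ha : a < 2 := hl a List.mem_cons_self
    have ht := ih (fun x hx => hl x (List.mem_cons_of_mem a hx))
    interval_cases a <;> simp [List.count_cons] <;> omega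

lemma digitcount (n : ℕ) (hn : n ≠ 0) : N1 n + N0 n = Nat.log 2 n + 1 := by
  rw [N1, N0, count_len _ (fun x hx => Nat.digits_lt_base (by norm_num) hx),
    Nat.digits_len 2 n (by norm_num) hn]

noncomputable def hh (N : ℕ) : ℝ := ∑ i ∈ range N, (1 : ℝ) / (i + 1)

lemma hh_eq (N : ℕ) : ((harmonic N : ℚ) : ℝ) = hh N := by
  simp [harmonic, hh, one_div]

lemma hh_succ (N : ℕ) : hh (N + 1) = hh N + 1 / (N + 1) := by
  simp [hh, Finset.sum_range_succ]

lemma blocksum (m M : ℕ) (hm : 1 ≤ m) (hmM : m ≤ M) :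
    ∑ n ∈ Ico m M, ((1:ℝ)/(2*n) - 1/(2*n+1)) =
      (hh (2*m-1) - hh (m-1)) - (hh (2*M-1) - hh (M-1)) := by
  induction M, hmM using Nat.le_induction with
  | base => simp
  | succ M hM ih =>
    rw [Finset.sum_Ico_succ_top hM, ih]
    have h1 : 2 * (M+1) - 1 = (2*M - 1) + 1 + 1 := by omega
    have h2 : (M + 1) - 1 = (M - 1) + 1 := by omega
    have h3 : ((2*M-1 : ℕ) : ℝ) = 2*M - 1 := by
      rw [Nat.cast_sub (by omega)]; push_cast; ring
    have h4 : ((M-1 : ℕ) : ℝ) = M - 1 := by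
      rw [Nat.cast_sub (hm.trans hM)]; norm_num
    have hM0 : (M:ℝ) ≠ 0 := Nat.cast_ne_zero.mpr (by omega)
    rw [h1, h2, hh_succ, hh_succ, hh_succ]
    push_cast
    rw [h3, h4]
    have h2M : (2*(M:ℝ)) ≠ 0 := by positivity
    have h2M1 : (2*(M:ℝ)+1) ≠ 0 := by positivity
    simp only [sub_add_cancel]
    field_simp
    ring

noncomputable def g (n : ℕ) : ℝ :=
  ((Nat.log 2 (n+1) : ℝ) + 1) * (1/(2*((n:ℝ)+1)) - 1/(2*((n:ℝ)+1)+1))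

lemma partialP (K : ℕ) : ∑ n ∈ range (2^K - 1), g n
    = (K+1) * hh (2^K - 1) - K * hh (2^(K+1) - 1) := by
  induction K with
  | zero => simp [hh]
  | succ K ih =>
    have hle : 2^K - 1 ≤ 2^(K+1) - 1 := by
      have := Nat.one_le_two_pow (n := K); omega
    rw [← Finset.sum_range_add_sum_Ico g hle, ih]
    have hmid : ∑ n ∈ Ico (2^K - 1) (2^(K+1) - 1), g n
        = ((K:ℝ)+1) * (((hh (2^(K+1)-1) - hh (2^K-1)) - (hh (2^(K+2)-1) - hh (2^(K+1)-1)))) := by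
      have step1 : ∑ n ∈ Ico (2^K - 1) (2^(K+1) - 1), g n
          = ((K:ℝ)+1) * ∑ n ∈ Ico (2^K : ℕ) (2^(K+1) : ℕ), ((1:ℝ)/(2*(n:ℝ)) - 1/(2*(n:ℝ)+1)) := by
        rw [Finset.mul_sum, Finset.sum_Ico_eq_sum_range, Finset.sum_Ico_eq_sum_range]
        have hlen : 2^(K+1) - 1 - (2^K - 1) = 2^(K+1) - 2^K := by
          have := Nat.one_le_two_pow (n := K); omega
        rw [hlen]
        refine Finset.sum_congr rfl fun i hi => ?_
        simp only [Finset.mem_range] at hi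
        have h1 : 2^K - 1 + i + 1 = 2^K + i := by
          have := Nat.one_le_two_pow (n := K); omega
        have hlog : Nat.log 2 (2^K - 1 + i + 1) = K := by
          rw [h1]
          refine Nat.log_eq_of_pow_le_of_lt_pow (by omega) ?_
          have : 2^(K+1) - 2^K = 2^K := by ring_nf; omega
          rw [pow_succ]
          omega
        rw [g, hlog]
        have h1' : ((2^K-1+i : ℕ):ℝ) + 1 = ((2^K+i : ℕ):ℝ) := by exact_mod_cast h1
        rw [h1']
      rw [step1, blocksum (2^K) (2^(K+1)) Nat.one_le_two_pow (by
        exact Nat.pow_le_pow_right (by norm_num) (by omega))]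
      rw [show 2*2^K - 1 = 2^(K+1) - 1 from by rw [pow_succ]; omega,
        show 2*2^(K+1) - 1 = 2^(K+2) - 1 from by rw [pow_succ _ (K+1)]; omega]
    rw [hmid]
    push_cast
    ring

lemma hh_sub (m M : ℕ) (h : m ≤ M) :
    hh M - hh m = ∑ i ∈ Ico m M, (1:ℝ)/(i+1) := by
  rw [hh, hh, eq_comm, Finset.sum_Ico_eq_sub _ h]

lemma tele (F : ℕ → ℝ) (m M : ℕ) (h : m ≤ M) :
    ∑ i ∈ Ico m M, (F (i+1) - F i) = F M - F m := by
  rw [Finset.sum_Ico_eq_sub _ h, Finset.sum_range_sub, Finset.sum_range_sub]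
  ring

lemma log_diff_le (i : ℕ) (hi : 1 ≤ i) : Real.log (i+1) - Real.log i ≤ 1/i := by
  have h0 : (0:ℝ) < i := by exact_mod_cast hi
  have := Real.log_le_sub_one_of_pos (x := ((i:ℝ)+1)/i) (by positivity)
  rw [Real.log_div (by positivity) (by positivity)] at this
  have h2 : ((i:ℝ)+1)/i - 1 = 1/i := by field_simp; ring
  linarith

lemma le_log_diff (i : ℕ) (hi : 1 ≤ i) : 1/((i:ℝ)+1) ≤ Real.log (i+1) - Real.log i := by
  have h0 : (0:ℝ) < i := by exact_mod_cast hi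
  have := Real.log_le_sub_one_of_pos (x := (i:ℝ)/(i+1)) (by positivity)
  rw [Real.log_div (by positivity) (by positivity)] at this
  have h2 : (i:ℝ)/(i+1) - 1 = -(1/(i+1)) := by field_simp; ring
  linarith

lemma hh_upper (m : ℕ) (hm : 1 ≤ m) : hh (2*m) - hh m ≤ Real.log 2 := by
  rw [hh_sub m (2*m) (by omega)]
  have key : ∑ i ∈ Ico m (2*m), ((1:ℝ)/(i+1))
      ≤ ∑ i ∈ Ico m (2*m), (Real.log (i+1) - Real.log i) := by
    refine Finset.sum_le_sum fun i hi => ?_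
    exact le_log_diff i (le_trans hm (Finset.mem_Ico.mp hi).1)
  have htele : ∑ i ∈ Ico m (2*m), (Real.log (i+1) - Real.log i)
      = Real.log ((2*m : ℕ)) - Real.log m := by
    have := tele (fun i : ℕ => Real.log i) m (2*m) (by omega)
    rw [← this]
    refine Finset.sum_congr rfl fun i _ => ?_
    push_cast
    ring_nf
  have hm0 : (m:ℝ) ≠ 0 := Nat.cast_ne_zero.mpr (by omega)
  have : Real.log ((2*m : ℕ)) - Real.log m = Real.log 2 := by
    push_cast
    rw [Real.log_mul (by norm_num) hm0]
    ring
  linarith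

lemma hh_lower (m : ℕ) (hm : 1 ≤ m) :
    Real.log 2 - 1/(2*(m:ℝ)+1) ≤ hh (2*m) - hh m := by
  rw [hh_sub m (2*m) (by omega)]
  have key : ∑ i ∈ Ico m (2*m), (Real.log (i+2) - Real.log (i+1))
      ≤ ∑ i ∈ Ico m (2*m), ((1:ℝ)/(i+1)) := by
    refine Finset.sum_le_sum fun i _ => ?_
    have := log_diff_le (i+1) (by omega)
    push_cast at this
    calc Real.log ((i:ℝ)+2) - Real.log ((i:ℝ)+1)
        = Real.log ((i:ℝ)+1+1) - Real.log ((i:ℝ)+1) := by ring_nf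
      _ ≤ 1/((i:ℝ)+1) := this
  have htele : ∑ i ∈ Ico m (2*m), (Real.log (i+2) - Real.log (i+1))
      = Real.log ((2*m : ℕ) + 1) - Real.log (m + 1) := by
    rw [← tele (fun i : ℕ => Real.log (i+1)) m (2*m) (by omega)]
    refine Finset.sum_congr rfl fun i _ => ?_
    push_cast
    ring_nf
  have hfin : Real.log 2 - 1/(2*(m:ℝ)+1)
      ≤ Real.log ((2*m : ℕ) + 1) - Real.log (m + 1) := by
    have hm0 : (0:ℝ) < m := by exact_mod_cast hm
    have hx : (0:ℝ) < (2*(m:ℝ)+2)/(2*(m:ℝ)+1) := by positivity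
    have h1 := Real.log_le_sub_one_of_pos hx
    rw [Real.log_div (by positivity) (by positivity)] at h1
    have h2 : Real.log (2*(m:ℝ)+2) = Real.log 2 + Real.log ((m:ℝ)+1) := by
      rw [← Real.log_mul (by norm_num) (by positivity)]
      ring_nf
    have h3 : (2*(m:ℝ)+2)/(2*(m:ℝ)+1) - 1 = 1/(2*(m:ℝ)+1) := by field_simp; norm_num; ring
    push_cast
    linarith
  linarith

lemma hh_bound (m : ℕ) (hm : 1 ≤ m) :
    0 ≤ hh (2*m-1) - hh (m-1) - Real.log 2 ∧
      hh (2*m-1) - hh (m-1) - Real.log 2 ≤ 1/(m:ℝ) := by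
  have hm0 : (0:ℝ) < m := by exact_mod_cast hm
  have e1 : hh (2*m) = hh (2*m-1) + 1/(2*(m:ℝ)) := by
    have h := hh_succ (2*m-1)
    rw [show (2*m-1)+1 = 2*m from by omega,
      show ((2*m-1:ℕ):ℝ) = 2*(m:ℝ)-1 from by rw [Nat.cast_sub (by omega)]; push_cast; ring] at h
    rw [h]; ring_nf
  have e2 : hh m = hh (m-1) + 1/(m:ℝ) := by
    have h := hh_succ (m-1)
    rw [show (m-1)+1 = m from by omega,
      show ((m-1:ℕ):ℝ) = (m:ℝ)-1 from by rw [Nat.cast_sub (by omega)]; norm_num] at h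
    rw [h]; ring_nf
  have h1 := hh_upper m hm
  have h2 := hh_lower m hm
  have h3 : (1:ℝ)/(2*m+1) ≤ 1/(2*m) := by
    apply one_div_le_one_div_of_le (by positivity)
    linarith
  have h5 : 1/(2*(m:ℝ)) + 1/(2*(m:ℝ)) = 1/(m:ℝ) := by
    field_simp
    norm_num
  constructor <;> linarith

noncomputable def u (K : ℕ) : ℝ := hh (2^K - 1) - K * Real.log 2

lemma tendsto_hh_log :
    Tendsto (fun n : ℕ => hh n - Real.log n) atTop (𝓝 Real.eulerMascheroniConstant) := by
  refine Real.tendsto_harmonic_sub_log.congr fun n => ?_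
  rw [hh_eq]

lemma tendsto_u : Tendsto u atTop (𝓝 Real.eulerMascheroniConstant) := by
  have h1 : Tendsto (fun K : ℕ => hh (2^K) - Real.log ((2^K : ℕ))) atTop
      (𝓝 Real.eulerMascheroniConstant) :=
    tendsto_hh_log.comp (tendsto_pow_atTop_atTop_of_one_lt (by norm_num))
  have h2 : Tendsto (fun K : ℕ => (1:ℝ)/2^K) atTop (𝓝 0) := by
    simpa [one_div, inv_pow] using
      tendsto_pow_atTop_nhds_zero_of_lt_one (by norm_num : (0:ℝ) ≤ 2⁻¹) (by norm_num)
  have key := h1.sub h2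
  rw [sub_zero] at key
  refine key.congr fun K => ?_
  have e1 : hh (2^K) = hh (2^K - 1) + 1/((2:ℝ)^K) := by
    have h := hh_succ (2^K - 1)
    rw [show (2^K - 1)+1 = 2^K from by have := Nat.one_le_two_pow (n := K); omega,
      show ((2^K-1:ℕ):ℝ) = 2^K-1 from by
        rw [Nat.cast_sub Nat.one_le_two_pow]; push_cast; ring] at h
    rw [h]; ring_nf
  rw [u, e1]
  have : Real.log ((2^K : ℕ)) = K * Real.log 2 := by
    push_cast
    rw [Real.log_pow]
  rw [this]
  ring

lemma tendsto_sK : Tendsto (fun K : ℕ => ((K:ℝ)+1) * hh (2^K - 1) - K * hh (2^(K+1) - 1))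
    atTop (𝓝 Real.eulerMascheroniConstant) := by
  have hdiff : ∀ K : ℕ, 0 ≤ u (K+1) - u K ∧ u (K+1) - u K ≤ 1/((2:ℝ)^K) := by
    intro K
    have hb := hh_bound (2^K) Nat.one_le_two_pow
    rw [show 2*2^K - 1 = 2^(K+1) - 1 from by rw [pow_succ]; omega] at hb
    have hc : ((2^K : ℕ) : ℝ) = 2^K := by push_cast; ring
    rw [hc] at hb
    have : u (K+1) - u K = hh (2^(K+1)-1) - hh (2^K-1) - Real.log 2 := by
      rw [u, u]; push_cast; ring
    rw [this]
    exact hb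
  have hzero : Tendsto (fun K : ℕ => (K:ℝ) * (u (K+1) - u K)) atTop (𝓝 0) := by
    have hsum : Summable (fun n : ℕ => (n:ℝ)^1 * (1/2:ℝ)^n) :=
      summable_pow_mul_geometric_of_norm_lt_one 1 (by rw [norm_of_nonneg] <;> norm_num)
    have htend : Tendsto (fun n : ℕ => (n:ℝ)^1 * (1/2:ℝ)^n) atTop (𝓝 0) :=
      hsum.tendsto_atTop_zero
    refine squeeze_zero (fun K => ?_) (fun K => ?_) htend
    · exact mul_nonneg (Nat.cast_nonneg K) (hdiff K).1
    · have h1 := (hdiff K).2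
      have h2 : (1:ℝ)/(2:ℝ)^K = (1/2:ℝ)^K := by rw [div_pow]; norm_num
      have : (K:ℝ) * (u (K+1) - u K) ≤ (K:ℝ) * ((1/2:ℝ)^K) := by
        refine mul_le_mul_of_nonneg_left ?_ (Nat.cast_nonneg K)
        rw [← h2]; exact h1
      simpa [pow_one] using this
  have := tendsto_u.sub hzero
  rw [sub_zero] at this
  refine this.congr fun K => ?_
  rw [u, u]
  push_cast
  ring

/-- `γ = ∑_{n=1}^∞ (N₁(n) + N₀(n)) / (2n(2n+1))`. -/
theorem gamma_eq_tsum_digitCount :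
    Real.eulerMascheroniConstant = ∑' n : ℕ,
      ((N1 (n + 1) + N0 (n + 1) : ℕ) : ℝ) /
        (2 * ((n : ℝ) + 1) * (2 * ((n : ℝ) + 1) + 1)) := by
  set f : ℕ → ℝ := fun n => ((N1 (n + 1) + N0 (n + 1) : ℕ) : ℝ) /
        (2 * ((n : ℝ) + 1) * (2 * ((n : ℝ) + 1) + 1)) with hf
  have hfg : ∀ n, f n = g n := by
    intro n
    rw [hf]
    simp only
    rw [digitcount (n+1) (Nat.succ_ne_zero n), g]
    have hn1 : (0:ℝ) < (n:ℝ)+1 := by positivity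
    push_cast
    field_simp
    ring
  have hnn : ∀ n, 0 ≤ f n := by
    intro n
    rw [hf]
    have hn1 : (0:ℝ) < (n:ℝ)+1 := by positivity
    positivity
  set s : ℕ → ℝ := fun N => ∑ n ∈ range N, f n with hs
  have hmono : Monotone s := by
    intro a b hab
    exact Finset.sum_le_sum_of_subset_of_nonneg (Finset.range_subset_range.mpr hab)
      (fun i _ _ => hnn i)
  have hsub : Tendsto (fun K => s (2^K - 1)) atTop (𝓝 Real.eulerMascheroniConstant) := by
    refine tendsto_sK.congr fun K => ?_
    rw [hs]
    simp only
    rw [Finset.sum_congr rfl (fun n _ => hfg n), partialP]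
  have hmono2 : Monotone (fun K => s (2^K - 1)) := by
    intro a b hab
    exact hmono (by have := Nat.pow_le_pow_right (show 1 ≤ 2 by norm_num) hab; omega)
  have hbdd : BddAbove (Set.range s) := by
    refine ⟨Real.eulerMascheroniConstant, ?_⟩
    rintro x ⟨N, rfl⟩
    calc s N ≤ s (2^N - 1) := hmono (by have := Nat.lt_two_pow_self (n := N); omega)
      _ ≤ _ := hmono2.ge_of_tendsto hsub N
  have hlim : Tendsto s atTop (𝓝 (⨆ N, s N)) := tendsto_atTop_ciSup hmono hbdd
  have hcomp : Tendsto (fun K => s (2^K - 1)) atTop (𝓝 (⨆ N, s N)) := by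
    refine hlim.comp (tendsto_atTop_mono (fun K => ?_) tendsto_id)
    simp only [id_eq]
    have := Nat.lt_two_pow_self (n := K)
    omega
  have heq : (⨆ N, s N) = Real.eulerMascheroniConstant := tendsto_nhds_unique hcomp hsub
  have hS : HasSum f Real.eulerMascheroniConstant := by
    rw [hasSum_iff_tendsto_nat_of_nonneg hnn]
    rw [← heq]
    exact hlim
  exact hS.tsum_eq.symm
end

section
/- Let q be an integer with q ≥ 2, and define the polynomial P_q(x) = (qx+1)(qx+2)⋯(qx+q−1) · Σ_{m=1}^{q−1} m(q−m)/(qx+m). Then Euler's constant γ satisfies γ = 1/2 + Σ_{n=1}^∞ ⌊log_q(qn)⌋ · P_q(n) / (qn(qn+1)(qn+2)⋯(qn+q)). -/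
open Real Filter Finset Topology

noncomputable def tt (m : ℕ) : ℝ := (1/m + 1/(m+1))/2 - Real.log ((m+1)/m)

lemma tt_abs (m : ℕ) (hm : 1 ≤ m) : |tt m| ≤ 1/(m:ℝ)^2 := by
  have hx : (1:ℝ) ≤ (m:ℝ) := by exact_mod_cast hm
  have hx0 : (0:ℝ) < m := by linarith
  have hx1 : (0:ℝ) < (m:ℝ)+1 := by linarith
  have hpos : (0:ℝ) < ((m:ℝ)+1)/m := by positivity
  have h1 : Real.log (((m:ℝ)+1)/m) ≤ 1/m := by
    have := Real.log_le_sub_one_of_pos hpos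
    have e : ((m:ℝ)+1)/m - 1 = 1/m := by field_simp; ring
    linarith [e ▸ this]
  have h2 : 1/((m:ℝ)+1) ≤ Real.log (((m:ℝ)+1)/m) := by
    have hpos' : (0:ℝ) < (m:ℝ)/((m:ℝ)+1) := by positivity
    have := Real.log_le_sub_one_of_pos hpos'
    have e : (m:ℝ)/((m:ℝ)+1) - 1 = -(1/((m:ℝ)+1)) := by field_simp; ring
    have e2 : Real.log ((m:ℝ)/((m:ℝ)+1)) = - Real.log (((m:ℝ)+1)/m) := by
      rw [← Real.log_inv]; congr 1; field_simp
    rw [e2, e] at this; linarith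
  have key : 1/(m:ℝ) - 1/((m:ℝ)+1) ≤ 2*(1/(m:ℝ)^2) := by
    rw [div_sub_div _ _ hx0.ne' hx1.ne', mul_one_div, div_le_div_iff₀ (by positivity) (by positivity)]
    nlinarith
  rw [abs_le]; unfold tt
  constructor <;> linarith

lemma tt_zero_of : tt 0 = 1/2 := by norm_num [tt]

lemma harmonic_cast (M : ℕ) : (harmonic M : ℝ) = ∑ i ∈ range M, (1/((i:ℝ)+1)) := by
  rw [harmonic]; push_cast; simp [one_div]

lemma tt_succ (m : ℕ) : tt (m+1) = (1/((m:ℝ)+1) + 1/((m:ℝ)+2))/2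
    - (Real.log ((m:ℝ)+2) - Real.log ((m:ℝ)+1)) := by
  unfold tt
  rw [Real.log_div (by positivity) (by positivity)]
  push_cast; ring_nf

lemma F_eq (M : ℕ) : ∑ m ∈ range M, tt (m+1)
    = ((harmonic M : ℝ) + (harmonic (M+1) : ℝ) - 1)/2 - Real.log ((M:ℝ)+1) := by
  induction M with
  | zero => simp [harmonic_succ]
  | succ M ih =>
    rw [Finset.sum_range_succ, ih, tt_succ, harmonic_succ (M+1), harmonic_succ M]
    push_cast
    ring_nf

lemma htF : Tendsto (fun M => ∑ m ∈ range M, tt (m+1)) atTop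
    (𝓝 (Real.eulerMascheroniConstant - 1/2)) := by
  have hlog0 : Tendsto (fun M:ℕ => Real.log ((M:ℝ)+2) - Real.log ((M:ℝ)+1)) atTop (𝓝 0) := by
    refine squeeze_zero (g := fun M : ℕ => 1/((M:ℝ)+1)) ?_ ?_ tendsto_one_div_add_atTop_nhds_zero_nat
    · intro M
      have h1 : Real.log ((M:ℝ)+1) ≤ Real.log ((M:ℝ)+2) :=
        Real.log_le_log (by positivity) (by norm_num)
      simpa using h1
    · intro M
      have h1 : (0:ℝ) < (M:ℝ)+1 := by positivity
      have e : Real.log ((M:ℝ)+2) - Real.log ((M:ℝ)+1) = Real.log (((M:ℝ)+2)/((M:ℝ)+1)) := by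
        rw [Real.log_div (by positivity) (by positivity)]
      rw [e]
      have := Real.log_le_sub_one_of_pos (show (0:ℝ) < ((M:ℝ)+2)/((M:ℝ)+1) by positivity)
      have e2 : ((M:ℝ)+2)/((M:ℝ)+1) - 1 = 1/((M:ℝ)+1) := by rw [div_sub_one (by positivity : ((M:ℝ)+1) ≠ 0)]; norm_num
      linarith [e2 ▸ this]
  have he : Tendsto Real.eulerMascheroniSeq atTop (𝓝 Real.eulerMascheroniConstant) :=
    Real.tendsto_eulerMascheroniSeq
  have he' : Tendsto (fun M => Real.eulerMascheroniSeq (M+1)) atTop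
      (𝓝 Real.eulerMascheroniConstant) := he.comp (tendsto_add_atTop_nat 1)
  have key : ∀ M : ℕ, ∑ m ∈ range M, tt (m+1) =
      (Real.eulerMascheroniSeq M + Real.eulerMascheroniSeq (M+1) - 1)/2
      + (Real.log ((M:ℝ)+2) - Real.log ((M:ℝ)+1))/2 := by
    intro M
    rw [F_eq]
    unfold Real.eulerMascheroniSeq
    push_cast
    ring_nf
  simp only [key]
  have := (((he.add he').sub_const 1).div_const 2).add (hlog0.div_const 2)
  convert this using 2
  ring

lemma sq_inv_summable : Summable (fun m : ℕ => 1/((m:ℝ)+1)^2) := by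
  have := (Real.summable_one_div_nat_pow (p := 2)).mpr (by norm_num)
  have := (summable_nat_add_iff 1).mpr this
  exact this.congr (fun m => by push_cast; ring)

lemma tt_summable : Summable (fun m => tt (m+1)) := by
  refine Summable.of_norm_bounded sq_inv_summable (fun m => ?_)
  have := tt_abs (m+1) (by omega)
  rw [Real.norm_eq_abs]
  push_cast at this ⊢
  exact this

noncomputable def WW (q m : ℕ) : ℝ := ((Nat.log q m + 1 : ℕ) : ℝ)

noncomputable def dd (q n : ℕ) : ℝ := tt n - ∑ j ∈ range q, tt (q*n + j)

lemma natlog_key {q : ℕ} (hq : 2 ≤ q) {n j : ℕ} (hn : 1 ≤ n) (hj : j < q) :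
    Nat.log q (q*n+j) = Nat.log q n + 1 := by
  have hdiv : (q*n+j)/q = n := by
    rw [Nat.mul_add_div (by omega)]
    simp [Nat.div_eq_of_lt hj]
  have h2 := Nat.log_div_base q (q*n+j)
  rw [hdiv] at h2
  have hle : q ≤ q*n+j := by
    have : q*1 ≤ q*n := Nat.mul_le_mul_left q hn
    omega
  have hpos : 0 < Nat.log q (q*n+j) := Nat.log_pos (by omega) hle
  omega

lemma W_one {q : ℕ} (hq : 2 ≤ q) {m : ℕ} (h2 : m < q) : WW q m = 1 := by
  unfold WW
  have : Nat.log q m = 0 := Nat.log_eq_zero_iff.mpr (Or.inl h2)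
  rw [this]; norm_num

lemma W_succ {q : ℕ} (hq : 2 ≤ q) {n j : ℕ} (hn : 1 ≤ n) (hj : j < q) :
    WW q (q*n+j) = WW q n + 1 := by
  unfold WW
  rw [natlog_key hq hn hj]
  push_cast; ring

lemma SS_eq {q : ℕ} (hq : 2 ≤ q) (N : ℕ) :
    ∑ n ∈ range N, WW q (n+1) * dd q (n+1)
      = (∑ m ∈ range (q*N + q - 1), tt (m+1)) - ∑ m ∈ Ico (N+1) (q*N+q), WW q m * tt m := by
  induction N with
  | zero =>
    have e0 : ∑ m ∈ Ico (0+1) (q*0+q), WW q m * tt m = ∑ m ∈ range (q*0+q-1), tt (m+1) := by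
      rw [Finset.sum_Ico_eq_sum_range]
      apply Finset.sum_congr (by congr 1 <;> omega)
      intro i hi
      have hi' : i < q*0+q - 1 := by
        have := Finset.mem_range.mp hi; omega
      rw [W_one hq (by omega), one_mul, add_comm]
    simp only [range_zero, sum_empty, e0]
    ring
  | succ N ih =>
    have hNq : N + 1 ≤ q*N + q := by
      have : 1*N ≤ q*N := Nat.mul_le_mul_right N (by omega)
      omega
    have hA : q*(N+1)+q-1 = (q*N+q-1) + q := by
      have : q*(N+1) = q*N+q := by ring
      omega
    rw [sum_range_succ, ih, hA, Finset.sum_range_add]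
    have hAterm : ∑ i ∈ range q, tt ((q*N+q-1) + i + 1) = ∑ i ∈ range q, tt (q*N+q+i) :=
      Finset.sum_congr rfl (fun i _ => by congr 1 <;> omega)
    rw [hAterm]
    have hdd : dd q (N+1) = tt (N+1) - ∑ j ∈ range q, tt (q*N+q+j) := by
      unfold dd
      have e : ∑ j ∈ range q, tt (q*(N+1)+j) = ∑ j ∈ range q, tt (q*N+q+j) :=
        Finset.sum_congr rfl (fun j _ => by congr 1 <;> ring)
      rw [e]
    have hsplit : ∑ m ∈ Ico (N+1+1) (q*(N+1)+q), WW q m * tt m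
        = (∑ m ∈ Ico (N+1) (q*N+q), WW q m * tt m)
          + (WW q (N+1) + 1) * (∑ j ∈ range q, tt (q*N+q+j)) - WW q (N+1) * tt (N+1) := by
      have h1 : ∑ m ∈ Ico (N+1) (q*(N+1)+q), WW q m * tt m
          = WW q (N+1) * tt (N+1) + ∑ m ∈ Ico (N+1+1) (q*(N+1)+q), WW q m * tt m :=
        Finset.sum_eq_sum_Ico_succ_bot (by
          have : 1*(N+1) ≤ q*(N+1) := Nat.mul_le_mul_right (N+1) (by omega)
          omega) _
      have h2 : ∑ m ∈ Ico (N+1) (q*(N+1)+q), WW q m * tt m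
          = (∑ m ∈ Ico (N+1) (q*N+q), WW q m * tt m)
            + ∑ m ∈ Ico (q*N+q) (q*(N+1)+q), WW q m * tt m :=
        (Finset.sum_Ico_consecutive _ (by omega) (by
          have : q*(N+1) = q*N+q := by ring
          omega)).symm
      have h3 : ∑ m ∈ Ico (q*N+q) (q*(N+1)+q), WW q m * tt m
          = (WW q (N+1) + 1) * ∑ j ∈ range q, tt (q*N+q+j) := by
        rw [Finset.sum_Ico_eq_sum_range, Finset.mul_sum]
        have hc : q*(N+1)+q - (q*N+q) = q := by
          have : q*(N+1) = q*N+q := by ring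
          omega
        rw [hc]
        apply Finset.sum_congr rfl
        intro j hj
        have hj' : j < q := Finset.mem_range.mp hj
        have e1 : q*N+q+j = q*(N+1)+j := by ring
        rw [add_comm (q*N+q) j]
        rw [show j + (q*N+q) = q*(N+1)+j by ring]
        rw [W_succ hq (by omega) hj']
      linarith [h1, h2, h3]
    rw [hsplit, hdd]
    ring

noncomputable def GG (m : ℕ) : ℝ := ((m:ℝ) ^ ((3:ℝ)/2))⁻¹

lemma GG_summable : Summable GG :=
  Real.summable_nat_rpow_inv.mpr (by norm_num)

lemma GG_nonneg (m : ℕ) : 0 ≤ GG m := by unfold GG; positivity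

lemma sqrt_div_sq (m : ℕ) (hm : 1 ≤ m) : Real.sqrt m * (1/(m:ℝ)^2) = GG m := by
  have hx : (0:ℝ) < m := by exact_mod_cast hm
  have h1 : Real.sqrt m = (m:ℝ) ^ ((1:ℝ)/2) := Real.sqrt_eq_rpow _
  have h2 : (1:ℝ)/(m:ℝ)^2 = (m:ℝ) ^ (-2:ℝ) := by
    rw [Real.rpow_neg hx.le, one_div, show ((2:ℝ)) = ((2:ℕ):ℝ) by norm_num,
      Real.rpow_natCast]
  have h3 : GG m = (m:ℝ) ^ (-((3:ℝ)/2)) := by unfold GG; rw [← Real.rpow_neg hx.le]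
  rw [h1, h2, h3, ← Real.rpow_add hx]
  norm_num

lemma W_le {q : ℕ} (hq : 2 ≤ q) {m : ℕ} (hm : 1 ≤ m) : WW q m ≤ 5 * Real.sqrt m := by
  have hm' : (1:ℝ) ≤ m := by exact_mod_cast hm
  have hsq : (1:ℝ) ≤ Real.sqrt m := by
    rw [show (1:ℝ) = Real.sqrt 1 by simp]
    exact Real.sqrt_le_sqrt hm'
  have hlogm : Real.log m ≤ 2 * Real.sqrt m := by
    have h1 : Real.log m = 2 * Real.log (Real.sqrt m) := by
      rw [Real.log_sqrt (by positivity)]; ring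
    have h2 : Real.log (Real.sqrt m) ≤ Real.sqrt m - 1 :=
      Real.log_le_sub_one_of_pos (by linarith)
    linarith
  have hk : ((Nat.log q m : ℕ) : ℝ) * Real.log q ≤ Real.log m := by
    have h1 : (q:ℝ) ^ (Nat.log q m) ≤ (m:ℝ) := by
      exact_mod_cast Nat.pow_log_le_self q (by omega)
    have h2 := Real.log_le_log (by positivity) h1
    rw [Real.log_pow] at h2
    linarith
  have hq2 : (1:ℝ)/2 < Real.log q := by
    have h2 : Real.log 2 ≤ Real.log q :=
      Real.log_le_log (by norm_num) (by exact_mod_cast hq)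
    have := Real.log_two_gt_d9
    linarith
  have hklog : ((Nat.log q m : ℕ) : ℝ) ≤ 2 * Real.log m := by
    have hknn : (0:ℝ) ≤ ((Nat.log q m : ℕ) : ℝ) := by positivity
    nlinarith
  unfold WW
  push_cast
  nlinarith [Real.log_natCast_nonneg m]

lemma Wt_bound {q : ℕ} (hq : 2 ≤ q) {m : ℕ} (hm : 1 ≤ m) :
    |WW q m * tt m| ≤ 5 * GG m := by
  have hW0 : 0 ≤ WW q m := by unfold WW; positivity
  rw [abs_mul, abs_of_nonneg hW0]
  calc WW q m * |tt m| ≤ (5 * Real.sqrt m) * (1/(m:ℝ)^2) := by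
        apply mul_le_mul (W_le hq hm) (tt_abs m hm) (abs_nonneg _) (by positivity)
    _ = 5 * GG m := by rw [mul_assoc, sqrt_div_sq m hm]

lemma dd_abs {q : ℕ} (hq : 2 ≤ q) {n : ℕ} (hn : 1 ≤ n) :
    |dd q n| ≤ ((q:ℝ)+1) * (1/(n:ℝ)^2) := by
  have hn' : (1:ℝ) ≤ n := by exact_mod_cast hn
  have h1 : |∑ j ∈ range q, tt (q*n+j)| ≤ ∑ j ∈ range q, |tt (q*n+j)| :=
    Finset.abs_sum_le_sum_abs _ _
  have h2 : ∑ j ∈ range q, |tt (q*n+j)| ≤ ∑ j ∈ range q, 1/(n:ℝ)^2 := by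
    apply Finset.sum_le_sum
    intro j _
    have hge : n ≤ q*n+j := by
      have : 1*n ≤ q*n := Nat.mul_le_mul_right n (by omega)
      omega
    have hge' : (n:ℝ) ≤ ((q*n+j : ℕ) : ℝ) := by exact_mod_cast hge
    calc |tt (q*n+j)| ≤ 1/((q*n+j : ℕ):ℝ)^2 := tt_abs _ (by omega)
      _ ≤ 1/(n:ℝ)^2 := by
          apply one_div_le_one_div_of_le (by positivity)
          nlinarith
  rw [Finset.sum_const, Finset.card_range, nsmul_eq_mul] at h2
  have h3 := tt_abs n hn
  unfold dd
  calc |tt n - ∑ j ∈ range q, tt (q*n+j)| ≤ |tt n| + |∑ j ∈ range q, tt (q*n+j)| :=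
        abs_sub _ _
    _ ≤ ((q:ℝ)+1) * (1/(n:ℝ)^2) := by nlinarith [abs_nonneg (tt n)]

lemma f_summable {q : ℕ} (hq : 2 ≤ q) :
    Summable (fun n => WW q (n+1) * dd q (n+1)) := by
  refine Summable.of_norm_bounded (g := fun n => (5*((q:ℝ)+1)) * GG (n+1)) ?_ ?_
  · exact ((summable_nat_add_iff 1).mpr GG_summable).mul_left _
  · intro n
    have hW0 : 0 ≤ WW q (n+1) := by unfold WW; positivity
    have hW := W_le hq (m := n+1) (by omega)
    have hd := dd_abs hq (n := n+1) (by omega)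
    have hG := sqrt_div_sq (n+1) (by omega)
    rw [Real.norm_eq_abs, abs_mul, abs_of_nonneg hW0]
    have h1 : WW q (n+1) * |dd q (n+1)|
        ≤ (5 * Real.sqrt ((n+1:ℕ):ℝ)) * (((q:ℝ)+1) * (1/((n+1:ℕ):ℝ)^2)) :=
      mul_le_mul hW hd (abs_nonneg _) (by positivity)
    show WW q (n+1) * |dd q (n+1)| ≤ 5*((q:ℝ)+1) * GG (n+1)
    have h2 : (5 * Real.sqrt ((n+1:ℕ):ℝ)) * (((q:ℝ)+1) * (1/((n+1:ℕ):ℝ)^2))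
        = (5*((q:ℝ)+1)) * GG (n+1) := by rw [← hG]; ring
    linarith

lemma tail_zero {q : ℕ} (hq : 2 ≤ q) :
    Tendsto (fun N => ∑ m ∈ Ico (N+1) (q*N+q), WW q m * tt m) atTop (𝓝 0) := by
  have hsum5 : Summable (fun m => 5 * GG m) := GG_summable.mul_left 5
  have hg : Tendsto (fun N : ℕ => ∑' i, 5 * GG (i + (N+1))) atTop (𝓝 0) :=
    (tendsto_sum_nat_add (fun m => 5 * GG m)).comp (tendsto_add_atTop_nat 1)
  refine squeeze_zero_norm (fun N => ?_) hg
  ·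
    rw [Real.norm_eq_abs]
    calc |∑ m ∈ Ico (N+1) (q*N+q), WW q m * tt m|
        ≤ ∑ m ∈ Ico (N+1) (q*N+q), |WW q m * tt m| := Finset.abs_sum_le_sum_abs _ _
      _ ≤ ∑ m ∈ Ico (N+1) (q*N+q), 5 * GG m := by
          apply Finset.sum_le_sum
          intro m hm
          have := (Finset.mem_Ico.mp hm).1
          exact Wt_bound hq (by omega)
      _ = ∑ i ∈ range (q*N+q - (N+1)), 5 * GG (i + (N+1)) := by
          rw [Finset.sum_Ico_eq_sum_range]
          exact Finset.sum_congr rfl (fun i _ => by rw [add_comm])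
      _ ≤ ∑' i, 5 * GG (i + (N+1)) := by
          apply Summable.sum_le_tsum _ (fun i _ => mul_nonneg (by norm_num) (GG_nonneg _))
          exact (summable_nat_add_iff (f := fun m => 5 * GG m) (N+1)).mpr hsum5

lemma main_hasSum {q : ℕ} (hq : 2 ≤ q) :
    HasSum (fun n => WW q (n+1) * dd q (n+1))
      (Real.eulerMascheroniConstant - 1/2) := by
  rw [(f_summable hq).hasSum_iff_tendsto_nat]
  have hcomp : Tendsto (fun N => q*N+q-1) atTop atTop := by
    apply tendsto_atTop_mono (fun N => ?_) tendsto_id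
    have : 1*N ≤ q*N := Nat.mul_le_mul_right N (by omega)
    simp only [id]
    omega
  have hA : Tendsto (fun N => ∑ m ∈ range (q*N+q-1), tt (m+1)) atTop
      (𝓝 (Real.eulerMascheroniConstant - 1/2)) := htF.comp hcomp
  have := hA.sub (tail_zero hq)
  rw [sub_zero] at this
  refine this.congr (fun N => ?_)
  exact (SS_eq hq N).symm

lemma floor_eq {q : ℕ} (hq : 2 ≤ q) (n : ℕ) :
    ((⌊Real.log ((q : ℝ) * ((n : ℝ) + 1)) / Real.log q⌋ : ℤ) : ℝ) = WW q (n+1) := by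
  have hcast : (q:ℝ) * ((n:ℝ)+1) = ((q*(n+1) : ℕ) : ℝ) := by push_cast; ring
  have h1 : Real.log ((q:ℝ)*((n:ℝ)+1)) / Real.log q = Real.logb q ((q*(n+1):ℕ):ℝ) := by
    rw [Real.logb, hcast]
  rw [h1, Real.floor_logb_natCast (by positivity), Int.log_natCast]
  have h2 := natlog_key hq (n := n+1) (j := 0) (by omega) (by omega)
  simp only [Nat.add_zero] at h2
  rw [h2]
  unfold WW
  push_cast
  ring

lemma icc_eq_ico {q : ℕ} (hq : 2 ≤ q) : Icc 1 (q-1) = Ico 1 q := by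
  rw [← Finset.Ico_add_one_right_eq_Icc]
  congr 1
  omega

lemma sum_icc_range {q : ℕ} (hq : 2 ≤ q) (f : ℕ → ℝ) :
    ∑ m ∈ Icc 1 (q-1), f m = ∑ i ∈ range (q-1), f (1+i) := by
  rw [icc_eq_ico hq, Finset.sum_Ico_eq_sum_range]

lemma prod_icc_range {q : ℕ} (hq : 2 ≤ q) (f : ℕ → ℝ) :
    ∏ m ∈ Icc 1 (q-1), f m = ∏ i ∈ range (q-1), f (1+i) := by
  rw [icc_eq_ico hq, Finset.prod_Ico_eq_prod_range]

lemma sum_range_split {q : ℕ} (hq : 2 ≤ q) (f : ℕ → ℝ) :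
    ∑ j ∈ range q, f j = f 0 + ∑ m ∈ Icc 1 (q-1), f m := by
  rw [sum_icc_range hq]
  have hq' : q = (q-1)+1 := by omega
  rw [hq', Finset.sum_range_succ']
  rw [← hq']
  have : ∑ i ∈ range (q-1), f (i+1) = ∑ i ∈ range (q-1), f (1+i) :=
    Finset.sum_congr rfl (fun i _ => by rw [add_comm])
  rw [this]; ring

lemma prod_range_split {q : ℕ} (hq : 2 ≤ q) (f : ℕ → ℝ) :
    ∏ j ∈ range q, f j = f 0 * ∏ m ∈ Icc 1 (q-1), f m := by
  rw [prod_icc_range hq]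
  have hq' : q = (q-1)+1 := by omega
  rw [hq', Finset.prod_range_succ']
  rw [← hq']
  have : ∏ i ∈ range (q-1), f (i+1) = ∏ i ∈ range (q-1), f (1+i) :=
    Finset.prod_congr rfl (fun i _ => by rw [add_comm])
  rw [this]; ring

lemma sum_range_split' {q : ℕ} (hq : 2 ≤ q) (f : ℕ → ℝ) :
    ∑ j ∈ range q, f (j+1) = (∑ m ∈ Icc 1 (q-1), f m) + f q := by
  have h1 := Finset.sum_range_succ' f (q)
  have h2 := Finset.sum_range_succ f q
  rw [h2] at h1
  have h3 := sum_range_split hq f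
  linarith

lemma gauss_sum {q : ℕ} (hq : 2 ≤ q) :
    ∑ m ∈ Icc 1 (q-1), (m:ℝ) = (q:ℝ)*((q:ℝ)-1)/2 := by
  have h0 : ∑ m ∈ range q, (m:ℝ) = ∑ m ∈ Icc 1 (q-1), (m:ℝ) := by
    rw [sum_range_split hq (fun m => (m:ℝ))]
    norm_num
  have hg := Finset.sum_range_id_mul_two q
  have hgr : (∑ m ∈ range q, (m:ℝ)) * 2 = (q:ℝ) * ((q:ℝ)-1) := by
    have h : ((∑ i ∈ range q, i : ℕ) : ℝ) * 2 = (((q * (q-1)) : ℕ) : ℝ) := by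
      exact_mod_cast congrArg (fun k : ℕ => (k:ℝ)) hg
    rw [Nat.cast_mul, Nat.cast_sub (by omega : 1 ≤ q)] at h
    push_cast at h
    linarith
  rw [← h0]
  linarith

lemma card_icc {q : ℕ} (hq : 2 ≤ q) : ((Icc 1 (q-1)).card : ℝ) = (q:ℝ) - 1 := by
  rw [Nat.card_Icc]
  push_cast [Nat.cast_sub (by omega : 1 ≤ q)]
  ring

lemma dd_eq {q : ℕ} (hq : 2 ≤ q) {n : ℕ} (hn : 1 ≤ n) :
    dd q n = ((∏ m ∈ Icc 1 (q-1), ((q:ℝ)*(n:ℝ) + (m:ℝ))) *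
          ∑ m ∈ Icc 1 (q-1), ((m:ℝ) * ((q:ℝ) - (m:ℝ))) / ((q:ℝ)*(n:ℝ) + (m:ℝ))) /
        ∏ j ∈ range (q+1), ((q:ℝ)*(n:ℝ) + (j:ℝ)) := by
  have hn' : (1:ℝ) ≤ (n:ℝ) := by exact_mod_cast hn
  have hq' : (2:ℝ) ≤ (q:ℝ) := by exact_mod_cast hq
  set x : ℝ := (q:ℝ)*(n:ℝ) with hxdef
  have hx0 : 0 < x := by rw [hxdef]; nlinarith
  have hq0 : (q:ℝ) ≠ 0 := by linarith
  have hn0 : (n:ℝ) ≠ 0 := by linarith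
  have hn10 : (n:ℝ)+1 ≠ 0 := by linarith
  have hxm_pos : ∀ m : ℕ, 0 < x + (m:ℝ) := fun m => by
    have := Nat.cast_nonneg (α := ℝ) m; linarith
  have hxm1_pos : ∀ m : ℕ, 0 < x + (m:ℝ) + 1 := fun m => by
    have := hxm_pos m; linarith
  -- cast of indices
  have hc : ∀ j : ℕ, ((q*n+j : ℕ):ℝ) = x + (j:ℝ) := fun j => by
    push_cast; rw [hxdef]
  have htt : ∀ j : ℕ, tt (q*n+j) =
      (1/(x+(j:ℝ)) + 1/(x+(j:ℝ)+1))/2 - Real.log ((x+(j:ℝ)+1)/(x+(j:ℝ))) := by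
    intro j; unfold tt; rw [hc j]
  -- telescoping logs
  have hterm : ∀ j : ℕ, Real.log ((x+(j:ℝ)+1)/(x+(j:ℝ)))
      = Real.log (x+((j+1:ℕ):ℝ)) - Real.log (x+(j:ℝ)) := by
    intro j
    rw [Real.log_div (hxm1_pos j).ne' (hxm_pos j).ne']
    push_cast; ring_nf
  have htel : ∑ j ∈ range q, Real.log ((x+(j:ℝ)+1)/(x+(j:ℝ)))
      = Real.log (((n:ℝ)+1)/(n:ℝ)) := by
    rw [Finset.sum_congr rfl (fun j _ => hterm j),
      Finset.sum_range_sub (fun j => Real.log (x+(j:ℝ)))]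
    have hxq : x + ((q:ℕ):ℝ) = (q:ℝ)*((n:ℝ)+1) := by rw [hxdef]; ring
    have hx00 : x + ((0:ℕ):ℝ) = (q:ℝ)*(n:ℝ) := by rw [hxdef]; norm_num
    rw [hxq, hx00, Real.log_mul hq0 hn10, Real.log_mul hq0 hn0,
      Real.log_div hn10 hn0]
    ring
  have e1 : ∑ j ∈ range q, tt (q*n+j)
      = (∑ j ∈ range q, (1/(x+(j:ℝ)) + 1/(x+(j:ℝ)+1))/2)
        - Real.log (((n:ℝ)+1)/(n:ℝ)) := by
    rw [← htel, ← Finset.sum_sub_distrib]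
    exact Finset.sum_congr rfl (fun j _ => htt j)
  have e2 : dd q n = (1/(n:ℝ) + 1/((n:ℝ)+1))/2
      - ∑ j ∈ range q, (1/(x+(j:ℝ)) + 1/(x+(j:ℝ)+1))/2 := by
    unfold dd
    rw [e1]
    unfold tt
    ring
  -- RHS reduction
  have hPpos : 0 < ∏ m ∈ Icc 1 (q-1), (x+(m:ℝ)) :=
    Finset.prod_pos (fun m _ => hxm_pos m)
  have hprod : ∏ j ∈ range (q+1), (x+(j:ℝ))
      = (∏ m ∈ Icc 1 (q-1), (x+(m:ℝ))) * (x*(x+(q:ℝ))) := by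
    rw [Finset.prod_range_succ, prod_range_split hq (fun j => x+(j:ℝ))]
    push_cast; ring
  have hRHS : ((∏ m ∈ Icc 1 (q-1), (x + (m:ℝ))) *
          ∑ m ∈ Icc 1 (q-1), ((m:ℝ) * ((q:ℝ) - (m:ℝ))) / (x + (m:ℝ))) /
        ∏ j ∈ range (q+1), (x + (j:ℝ))
      = ∑ m ∈ Icc 1 (q-1), ((m:ℝ)*((q:ℝ)-(m:ℝ)))/((x+(m:ℝ))*(x*(x+(q:ℝ)))) := by
    rw [hprod, mul_div_mul_left _ _ hPpos.ne', Finset.sum_div]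
    exact Finset.sum_congr rfl (fun m _ => by rw [div_div])
  have hpf : ∀ m ∈ Icc 1 (q-1), ((m:ℝ)*((q:ℝ)-(m:ℝ)))/((x+(m:ℝ))*(x*(x+(q:ℝ))))
      = ((q:ℝ)-(m:ℝ))/((q:ℝ)*x) + (m:ℝ)/((q:ℝ)*(x+(q:ℝ))) - 1/(x+(m:ℝ)) := by
    intro m _
    have h1 : x+(m:ℝ) ≠ 0 := (hxm_pos m).ne'
    have h2 : x+(q:ℝ) ≠ 0 := by
      have := hxm_pos q; simpa using this.ne'
    field_simp
    ring
  have hg2 : ∑ m ∈ Icc 1 (q-1), ((q:ℝ)-(m:ℝ)) = (q:ℝ)*((q:ℝ)-1)/2 := by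
    rw [Finset.sum_sub_distrib, Finset.sum_const, nsmul_eq_mul, card_icc hq,
      gauss_sum hq]
    ring
  have hsum : ∑ m ∈ Icc 1 (q-1), ((m:ℝ)*((q:ℝ)-(m:ℝ)))/((x+(m:ℝ))*(x*(x+(q:ℝ))))
      = ((q:ℝ)*((q:ℝ)-1)/2)/((q:ℝ)*x) + ((q:ℝ)*((q:ℝ)-1)/2)/((q:ℝ)*(x+(q:ℝ)))
        - ∑ m ∈ Icc 1 (q-1), 1/(x+(m:ℝ)) := by
    rw [Finset.sum_congr rfl hpf, Finset.sum_sub_distrib, Finset.sum_add_distrib,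
      ← Finset.sum_div, ← Finset.sum_div, hg2, gauss_sum hq]
  -- LHS final form
  have ha : ∑ j ∈ range q, 1/(x+(j:ℝ)) = 1/x + ∑ m ∈ Icc 1 (q-1), 1/(x+(m:ℝ)) := by
    have h := sum_range_split hq (fun m => 1/(x+(m:ℝ)))
    simpa using h
  have hb : ∑ j ∈ range q, 1/(x+(j:ℝ)+1)
      = (∑ m ∈ Icc 1 (q-1), 1/(x+(m:ℝ))) + 1/(x+(q:ℝ)) := by
    have h := sum_range_split' hq (fun m => 1/(x+(m:ℝ)))
    rw [← h]
    exact Finset.sum_congr rfl (fun j _ => by push_cast; ring_nf)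
  have hH1 : ∑ j ∈ range q, (1/(x+(j:ℝ)) + 1/(x+(j:ℝ)+1))/2
      = ((∑ j ∈ range q, 1/(x+(j:ℝ))) + ∑ j ∈ range q, 1/(x+(j:ℝ)+1))/2 := by
    rw [← Finset.sum_div, Finset.sum_add_distrib]
  have havg1 : (q:ℝ)/x = 1/(n:ℝ) := by rw [hxdef]; field_simp
  have havg2 : (q:ℝ)/(x+(q:ℝ)) = 1/((n:ℝ)+1) := by
    rw [hxdef]; rw [div_eq_div_iff (by nlinarith) (by linarith)]; ring
  have hfr : ∀ y:ℝ, y ≠ 0 → ((q:ℝ)*((q:ℝ)-1)/2)/((q:ℝ)*y) = (((q:ℝ)-1)/2) * (1/y) := by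
    intro y hy; field_simp
  have h2 : x+(q:ℝ) ≠ 0 := by
    have := hxm_pos q; simpa using this.ne'
  rw [e2, hH1, ha, hb, hRHS, hsum, hfr x hx0.ne', hfr _ h2, ← havg1, ← havg2]
  ring

/-- Generalized Addison series for Euler's constant, with the polynomial
`P_q(x) = (qx+1)(qx+2)⋯(qx+q-1) ∑_{m=1}^{q-1} m(q-m)/(qx+m)`. -/
theorem gamma_eq_generalized_addison_series (q : ℕ) (hq : 2 ≤ q) :
    Real.eulerMascheroniConstant = 1 / 2 + ∑' n : ℕ,
      (⌊Real.log ((q : ℝ) * ((n : ℝ) + 1)) / Real.log q⌋ : ℝ) *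
        ((∏ m ∈ Finset.Icc 1 (q - 1), ((q : ℝ) * ((n : ℝ) + 1) + (m : ℝ))) *
          ∑ m ∈ Finset.Icc 1 (q - 1),
            ((m : ℝ) * ((q : ℝ) - (m : ℝ))) / ((q : ℝ) * ((n : ℝ) + 1) + (m : ℝ))) /
        ∏ j ∈ Finset.range (q + 1), ((q : ℝ) * ((n : ℝ) + 1) + (j : ℝ)) := by
  have he : ∀ n : ℕ,
      (⌊Real.log ((q : ℝ) * ((n : ℝ) + 1)) / Real.log q⌋ : ℝ) *
        ((∏ m ∈ Finset.Icc 1 (q - 1), ((q : ℝ) * ((n : ℝ) + 1) + (m : ℝ))) *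
          ∑ m ∈ Finset.Icc 1 (q - 1),
            ((m : ℝ) * ((q : ℝ) - (m : ℝ))) / ((q : ℝ) * ((n : ℝ) + 1) + (m : ℝ))) /
        ∏ j ∈ Finset.range (q + 1), ((q : ℝ) * ((n : ℝ) + 1) + (j : ℝ))
      = WW q (n+1) * dd q (n+1) := by
    intro n
    rw [floor_eq hq n]
    congr 1
    rw [dd_eq hq (n := n+1) (by omega)]
    push_cast
    ring_nf
  rw [tsum_congr he, (main_hasSum hq).tsum_eq]
  ring
end

section
/- Euler's constant γ satisfies Addison's series: γ = 1/2 + Σ_{n=1}^∞ ⌊log₂(2n)⌋ / (2n(2n+1)(2n+2)). -/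
open Real Filter Topology Finset

namespace AddisonAux

/-- Real-valued harmonic numbers. -/
noncomputable def H (n : ℕ) : ℝ := ((harmonic n : ℚ) : ℝ)

lemma H_succ (n : ℕ) : H (n + 1) = H n + 1 / ((n : ℝ) + 1) := by
  simp only [H, harmonic_succ]
  push_cast
  ring

/-- The telescoping auxiliary function. -/
noncomputable def g (p : ℕ) : ℝ := H (2 * p) - H p + 1 / (4 * (p : ℝ))

/-- The unweighted summand. -/
noncomputable def u (n : ℕ) : ℝ :=
  1 / (2 * (n : ℝ) * (2 * (n : ℝ) + 1) * (2 * (n : ℝ) + 2))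

lemma u_eq {n : ℕ} (hn : 1 ≤ n) : u n = g n - g (n + 1) := by
  have hn' : (1 : ℝ) ≤ (n : ℝ) := by exact_mod_cast hn
  have h1 : H (2 * (n + 1)) = H (2 * n) + 1 / (2 * (n : ℝ) + 1) + 1 / (2 * (n : ℝ) + 2) := by
    have e : 2 * (n + 1) = (2 * n + 1) + 1 := by ring
    rw [e, H_succ, H_succ]
    push_cast
    ring
  have h2 : H (n + 1) = H n + 1 / ((n : ℝ) + 1) := H_succ n
  have hne1 : (n : ℝ) ≠ 0 := by linarith
  have hne2 : 2 * (n : ℝ) + 1 ≠ 0 := by linarith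
  have hne3 : 2 * (n : ℝ) + 2 ≠ 0 := by linarith
  have hne4 : (n : ℝ) + 1 ≠ 0 := by linarith
  rw [u, g, g, h1, h2]
  push_cast
  field_simp
  ring

lemma sum_u {p q : ℕ} (hp : 1 ≤ p) (hpq : p ≤ q) :
    ∑ n ∈ Finset.Ico p q, u n = g p - g q := by
  induction q, hpq using Nat.le_induction with
  | base => simp
  | succ q hq ih =>
      rw [Finset.sum_Ico_succ_top hq, ih, u_eq (hp.trans hq)]
      ring

/-- The weighted summand (indexed so that `n : ℕ` corresponds to the integer `n+1`). -/
noncomputable def a (n : ℕ) : ℝ := (Nat.log 2 (2 * (n + 1)) : ℝ) * u (n + 1)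

lemma sum_a (m : ℕ) : ∑ n ∈ Finset.range (2 ^ m - 1), a n
    = H (2 ^ m) - 1 / 2 - (1 / 2 : ℝ) ^ (m + 1) - (m : ℝ) * g (2 ^ m) := by
  induction m with
  | zero =>
      norm_num [H, harmonic_succ, harmonic_zero]
  | succ m ih =>
      have h1 : (1 : ℕ) ≤ 2 ^ m := Nat.one_le_two_pow
      have h1' : (1 : ℕ) ≤ 2 ^ (m + 1) := Nat.one_le_two_pow
      have hle : 2 ^ m ≤ 2 ^ (m + 1) := Nat.pow_le_pow_right (by norm_num) (Nat.le_succ m)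
      have h2 : 2 ^ m - 1 ≤ 2 ^ (m + 1) - 1 := by omega
      rw [Finset.range_eq_Ico, ← Finset.sum_Ico_consecutive _ (Nat.zero_le _) h2,
        ← Finset.range_eq_Ico, ih]
      have hpow1 : (2 : ℕ) ^ (m + 1) = 2 * 2 ^ m := by rw [pow_succ]; ring
      have hpow2 : (2 : ℕ) ^ (m + 2) = 2 * 2 ^ (m + 1) := by rw [pow_succ _ (m+1)]; ring
      have hblock : ∑ n ∈ Finset.Ico (2 ^ m - 1) (2 ^ (m + 1) - 1), a n
          = ((m : ℝ) + 1) * (g (2 ^ m) - g (2 ^ (m + 1))) := by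
        have hcongr : ∀ n ∈ Finset.Ico (2 ^ m - 1) (2 ^ (m + 1) - 1),
            a n = ((m : ℝ) + 1) * u (n + 1) := by
          intro n hn
          simp only [Finset.mem_Ico] at hn
          have hl : 2 ^ (m + 1) ≤ 2 * (n + 1) := by omega
          have hr : 2 * (n + 1) < 2 ^ (m + 2) := by omega
          rw [a, Nat.log_eq_of_pow_le_of_lt_pow hl hr]
          push_cast
          ring
        rw [Finset.sum_congr rfl hcongr, ← Finset.mul_sum]
        congr 1
        have hre : ∑ n ∈ Finset.Ico (2 ^ m - 1) (2 ^ (m + 1) - 1), u (n + 1)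
            = ∑ n ∈ Finset.Ico (2 ^ m - 1 + 1) (2 ^ (m + 1) - 1 + 1), u n :=
          Finset.sum_Ico_add' u (2 ^ m - 1) (2 ^ (m + 1) - 1) 1
        rw [hre]
        have e1 : 2 ^ m - 1 + 1 = 2 ^ m := by omega
        have e2 : 2 ^ (m + 1) - 1 + 1 = 2 ^ (m + 1) := by omega
        rw [e1, e2]
        exact sum_u h1 hle
      rw [hblock]
      have hg2 : g (2 ^ m) = H (2 ^ (m + 1)) - H (2 ^ m) + 1 / (4 * ((2 : ℝ) ^ m)) := by
        rw [g, ← hpow1]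
        push_cast
        ring
      have hpw : ((2 : ℝ) ^ m) ≠ 0 := by positivity
      rw [hg2]
      push_cast
      rw [show (1 / 2 : ℝ) ^ (m + 1) = 1 / (2 * 2 ^ m) by
            rw [one_div_pow, pow_succ]; ring,
          show (1 / 2 : ℝ) ^ (m + 1 + 1) = 1 / (4 * 2 ^ m) by
            rw [one_div_pow, pow_succ, pow_succ]; ring]
      field_simp
      ring

/-! ### Error bounds -/

lemma E_lower {n : ℕ} (hn : 1 ≤ n) :
    Real.eulerMascheroniConstant ≤ H n - Real.log n := by
  have h := Real.eulerMascheroniConstant_lt_eulerMascheroniSeq' n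
  rw [Real.eulerMascheroniSeq', if_neg (by omega : n ≠ 0)] at h
  exact le_of_lt h

lemma E_upper {n : ℕ} (hn : 1 ≤ n) :
    H n - Real.log n - Real.eulerMascheroniConstant ≤ 1 / n := by
  have h := Real.eulerMascheroniSeq_lt_eulerMascheroniConstant n
  rw [Real.eulerMascheroniSeq] at h
  have hn' : (0 : ℝ) < (n : ℝ) := by exact_mod_cast hn
  have hlog : Real.log ((n : ℝ) + 1) - Real.log n ≤ 1 / n := by
    rw [← Real.log_div (by positivity) (by positivity)]
    have := Real.log_le_sub_one_of_pos (show (0:ℝ) < ((n : ℝ) + 1) / n by positivity)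
    have he : ((n : ℝ) + 1) / n - 1 = 1 / n := by field_simp; ring
    linarith
  have : H n - Real.log ((n : ℝ) + 1) < Real.eulerMascheroniConstant := h
  linarith

lemma g_bound {p : ℕ} (hp : 1 ≤ p) : |g p - Real.log 2| ≤ 2 / p := by
  have hp' : (0 : ℝ) < (p : ℝ) := by exact_mod_cast hp
  have h2p : (1 : ℕ) ≤ 2 * p := by omega
  have hA0 := E_lower h2p
  have hA1 := E_upper h2p
  have hB0 := E_lower hp
  have hB1 := E_upper hp
  have hcast : ((2 * p : ℕ) : ℝ) = 2 * (p : ℝ) := by push_cast; ring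
  rw [hcast] at hA0 hA1
  have hlog : Real.log (2 * (p : ℝ)) = Real.log 2 + Real.log p :=
    Real.log_mul two_ne_zero (ne_of_gt hp')
  have e1 : 1 / (2 * (p : ℝ)) = (1 / 2) * (1 / p) := by field_simp
  have e2 : 1 / (4 * (p : ℝ)) = (1 / 4) * (1 / p) := by field_simp
  have e3 : 2 / (p : ℝ) = 2 * (1 / p) := by ring
  have hip : 0 < 1 / (p : ℝ) := by positivity
  rw [g, abs_le]
  constructor <;> linarith [hA0, hA1, hB0, hB1, e1, e2, e3, hip, hlog]

/-! ### Summability -/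

lemma a_nonneg (n : ℕ) : 0 ≤ a n := by
  rw [a, u]
  have : (0:ℝ) < ((n:ℝ) + 1) := by positivity
  push_cast
  positivity

lemma a_le (n : ℕ) : a n ≤ 1 / ((n : ℝ) + 1) ^ 2 := by
  have hlog : (Nat.log 2 (2 * (n + 1)) : ℝ) ≤ 2 * ((n : ℝ) + 1) := by
    have := Nat.log_le_self 2 (2 * (n + 1))
    have : (Nat.log 2 (2 * (n + 1)) : ℝ) ≤ ((2 * (n + 1) : ℕ) : ℝ) := by exact_mod_cast this
    push_cast at this
    linarith
  have hx : (0 : ℝ) < (n : ℝ) + 1 := by positivity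
  rw [a, u]
  push_cast
  rw [div_eq_mul_inv, ← mul_assoc]
  calc (Nat.log 2 (2 * (n + 1)) : ℝ) * 1 *
        (2 * ((n:ℝ)+1) * (2 * ((n:ℝ)+1) + 1) * (2 * ((n:ℝ)+1) + 2))⁻¹
      ≤ (2 * ((n:ℝ)+1)) * (2 * ((n:ℝ)+1) * (2 * ((n:ℝ)+1) + 1) * (2 * ((n:ℝ)+1) + 2))⁻¹ := by
        apply mul_le_mul_of_nonneg_right (by linarith) (by positivity)
    _ ≤ 1 / ((n : ℝ) + 1) ^ 2 := by
        rw [mul_inv_le_iff₀ (by positivity), div_mul_eq_mul_div, le_div_iff₀ (by positivity)]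
        nlinarith
  
lemma a_summable : Summable a := by
  have hs : Summable (fun n : ℕ => 1 / ((n : ℝ) + 1) ^ 2) := by
    have := Real.summable_one_div_nat_pow.mpr (le_refl 2)
    have h2 := (summable_nat_add_iff 1).mpr this
    exact h2.congr (fun n => by push_cast; ring)
  exact Summable.of_nonneg_of_le a_nonneg a_le hs

/-! ### Limits -/

lemma tsum_a : ∑' n, a n = Real.eulerMascheroniConstant - 1 / 2 := by
  have htwo : Tendsto (fun m : ℕ => 2 ^ m) atTop atTop :=
    tendsto_pow_atTop_atTop_of_one_lt one_lt_two
  -- limit of the closed form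
  have hH : Tendsto (fun m : ℕ => H (2 ^ m) - Real.log (((2 ^ m : ℕ) : ℝ))) atTop
      (𝓝 Real.eulerMascheroniConstant) := by
    have := Real.tendsto_harmonic_sub_log.comp htwo
    exact this
  have t2 : Tendsto (fun m : ℕ => (m : ℝ) * (g (2 ^ m) - Real.log 2)) atTop (𝓝 0) := by
    apply squeeze_zero_norm (a := fun m : ℕ => 2 * ((m : ℝ) * (1 / 2 : ℝ) ^ m))
    · intro m
      have hb := g_bound (p := 2 ^ m) Nat.one_le_two_pow
      have hcast : ((2 ^ m : ℕ) : ℝ) = (2 : ℝ) ^ m := by push_cast; ring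
      rw [hcast] at hb
      have hm : (0 : ℝ) ≤ (m : ℝ) := Nat.cast_nonneg m
      have : ‖(m : ℝ) * (g (2 ^ m) - Real.log 2)‖ = (m : ℝ) * |g (2 ^ m) - Real.log 2| := by
        rw [norm_mul, Real.norm_eq_abs, Real.norm_eq_abs, abs_of_nonneg hm]
      rw [this]
      have h2 : (m : ℝ) * |g (2 ^ m) - Real.log 2| ≤ (m : ℝ) * (2 / (2 : ℝ) ^ m) :=
        mul_le_mul_of_nonneg_left hb hm
      have he : (m : ℝ) * (2 / (2 : ℝ) ^ m) = 2 * ((m : ℝ) * (1 / 2 : ℝ) ^ m) := by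
        rw [one_div_pow]
        field_simp
      linarith [he ▸ h2]
    · have := (tendsto_self_mul_const_pow_of_lt_one (by norm_num : (0:ℝ) ≤ 1/2)
        (by norm_num : (1/2 : ℝ) < 1)).const_mul 2
      simpa using this
  have t3 : Tendsto (fun m : ℕ => (1 / 2 : ℝ) ^ (m + 1)) atTop (𝓝 0) := by
    have := (tendsto_pow_atTop_nhds_zero_of_lt_one (by norm_num : (0:ℝ) ≤ 1/2)
      (by norm_num : (1/2 : ℝ) < 1)).const_mul (1/2 : ℝ)
    simpa [pow_succ, mul_comm] using this
  have hP1 : Tendsto (fun m : ℕ => ∑ n ∈ Finset.range (2 ^ m - 1), a n) atTop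
      (𝓝 (Real.eulerMascheroniConstant - 1 / 2)) := by
    have hcomb := ((hH.sub (tendsto_const_nhds (x := (1/2 : ℝ)))).sub t3).sub t2
    simp only [sub_zero] at hcomb
    apply hcomb.congr
    intro m
    rw [sum_a m]
    have hcast : ((2 ^ m : ℕ) : ℝ) = (2 : ℝ) ^ m := by push_cast; ring
    have hlog : Real.log (((2 ^ m : ℕ) : ℝ)) = (m : ℝ) * Real.log 2 := by
      rw [hcast, Real.log_pow]
    rw [hlog]
    ring
  have hP2 : Tendsto (fun m : ℕ => ∑ n ∈ Finset.range (2 ^ m - 1), a n) atTop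
      (𝓝 (∑' n, a n)) := by
    have hsub : Tendsto (fun m : ℕ => 2 ^ m - 1) atTop atTop :=
      (tendsto_sub_atTop_nat 1).comp htwo
    exact a_summable.hasSum.tendsto_sum_nat.comp hsub
  exact tendsto_nhds_unique hP2 hP1

lemma summand_eq (n : ℕ) :
    (⌊Real.log (2 * ((n : ℝ) + 1)) / Real.log 2⌋ : ℝ) /
        (2 * ((n : ℝ) + 1) * (2 * ((n : ℝ) + 1) + 1) * (2 * ((n : ℝ) + 1) + 2)) = a n := by
  have hr : (2 : ℝ) * ((n : ℝ) + 1) = ((2 * (n + 1) : ℕ) : ℝ) := by push_cast; ring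
  have hfl : ⌊Real.log (2 * ((n : ℝ) + 1)) / Real.log 2⌋ = (Nat.log 2 (2 * (n + 1)) : ℤ) := by
    rw [Real.log_div_log, hr]
    have h := Real.floor_logb_natCast (b := 2) (r := ((2 * (n + 1) : ℕ) : ℝ))
      (by positivity)
    simp only [Nat.cast_ofNat] at h
    rw [h, Int.log_natCast]
  rw [hfl, a, u]
  push_cast
  ring

end AddisonAux

open AddisonAux in
/-- Addison's series: `γ = 1/2 + ∑_{n=1}^∞ ⌊log₂(2n)⌋ / (2n(2n+1)(2n+2))`. -/
theorem gamma_eq_addison_series :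
    Real.eulerMascheroniConstant = 1 / 2 + ∑' n : ℕ,
      (⌊Real.log (2 * ((n : ℝ) + 1)) / Real.log 2⌋ : ℝ) /
        (2 * ((n : ℝ) + 1) * (2 * ((n : ℝ) + 1) + 1) * (2 * ((n : ℝ) + 1) + 2)) := by
  rw [tsum_congr summand_eq, tsum_a]
  ring
end

section
/- Euler's constant γ satisfies γ = 1/2 + Σ_{n=1}^∞ ⌊log₃(3n)⌋ · (12n + 6) / (3n(3n+1)(3n+2)(3n+3)). -/
open Real Filter Finset Topology

noncomputable def gb3H (N : ℕ) : ℝ := ∑ i ∈ Finset.range N, (1:ℝ)/(i+1)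

noncomputable def gb3g (m : ℕ) : ℝ :=
  1/(3*(m:ℝ)) - 1/(3*(m:ℝ)+1) - 1/(3*(m:ℝ)+2) + 1/(3*(m:ℝ)+3)

noncomputable def gb3Phi (N : ℕ) : ℝ := gb3H N - gb3H (3*N) - 1/(3*(N:ℝ))

lemma gb3H_succ (N : ℕ) : gb3H (N+1) = gb3H N + 1/((N:ℝ)+1) := by
  simp [gb3H, Finset.sum_range_succ]

lemma gb3H_3succ (N : ℕ) : gb3H (3*(N+1)) =
    gb3H (3*N) + 1/(3*(N:ℝ)+1) + 1/(3*(N:ℝ)+2) + 1/(3*(N:ℝ)+3) := by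
  have h : 3*(N+1) = (3*N+1)+1+1 := by ring
  rw [h, gb3H_succ, gb3H_succ, gb3H_succ]
  push_cast; ring

lemma gb3Phi_diff (m : ℕ) : gb3Phi (m+1) - gb3Phi m = gb3g m := by
  have h1 : ((m:ℝ)+1) ≠ 0 := by positivity
  rw [gb3Phi, gb3Phi, gb3H_succ, gb3H_3succ, gb3g]
  have h : 3*((m:ℕ)+1) = 3*m+3 := by ring
  push_cast
  field_simp
  ring

lemma gb3_sum_g (A B : ℕ) (h : A ≤ B) :
    ∑ m ∈ Finset.Ico A B, gb3g m = gb3Phi B - gb3Phi A := by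
  have hr : ∀ N, ∑ m ∈ Finset.range N, gb3g m = gb3Phi N - gb3Phi 0 := by
    intro N
    rw [← Finset.sum_range_sub gb3Phi]
    exact Finset.sum_congr rfl fun m _ => (gb3Phi_diff m).symm
  rw [Finset.sum_Ico_eq_sub _ h, hr, hr]
  ring

lemma gb3_natlog (J m : ℕ) (h1 : 3^J ≤ m) (h2 : m < 3^(J+1)) :
    Nat.log 3 (3*m) = J + 1 := by
  apply Nat.log_eq_of_pow_le_of_lt_pow
  · rw [pow_succ, mul_comm]; exact Nat.mul_le_mul_left 3 h1
  · calc 3*m < 3*3^(J+1) := by omega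
      _ = 3^(J+1+1) := by ring

lemma gb3_key (J : ℕ) :
    ∑ m ∈ Finset.Ico 1 (3^J), (Nat.log 3 (3*m) : ℝ) * gb3g m
      = J * gb3Phi (3^J) - ∑ j ∈ Finset.range J, gb3Phi (3^j) := by
  induction J with
  | zero => simp
  | succ J ih =>
    have hle : (1:ℕ) ≤ 3^J := Nat.one_le_pow _ _ (by norm_num)
    have hle2 : (3:ℕ)^J ≤ 3^(J+1) := Nat.pow_le_pow_right (by norm_num) (by omega)
    rw [← Finset.sum_Ico_consecutive _ hle hle2, ih]
    have hc : ∑ m ∈ Finset.Ico (3^J) (3^(J+1)), (Nat.log 3 (3*m) : ℝ) * gb3g m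
        = (J+1) * (gb3Phi (3^(J+1)) - gb3Phi (3^J)) := by
      rw [← gb3_sum_g _ _ hle2, Finset.mul_sum]
      apply Finset.sum_congr rfl
      intro m hm
      rw [Finset.mem_Ico] at hm
      rw [gb3_natlog J m hm.1 hm.2]
      push_cast; ring
    rw [hc, Finset.sum_range_succ]
    push_cast
    ring

lemma gb3_sumPhi (J : ℕ) :
    ∑ j ∈ Finset.range J, gb3Phi (3^j)
      = gb3H 1 - gb3H (3^J) - (1/2) * (1 - (1/3:ℝ)^J) := by
  induction J with
  | zero => simp
  | succ J ih =>
    rw [Finset.sum_range_succ, ih]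
    have h3 : (3:ℕ)*3^J = 3^(J+1) := by ring
    have hc : ((3^J : ℕ) : ℝ) = 3^J := by push_cast; ring
    rw [gb3Phi, h3, hc]
    have : (1:ℝ)/(3*3^J) = (1/3:ℝ)^(J+1) := by
      rw [div_eq_iff (by positivity)]
      rw [pow_succ]
      field_simp
      rw [← mul_pow]; norm_num
    rw [this]
    ring

lemma gb3_H_eq_harmonic (N : ℕ) : gb3H N = (harmonic N : ℝ) := by
  rw [gb3H, harmonic]
  push_cast
  apply Finset.sum_congr rfl
  intro i _
  rw [one_div]

lemma gb3_tendsto_H_sub_log :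
    Tendsto (fun n : ℕ => gb3H n - Real.log n) atTop (𝓝 eulerMascheroniConstant) := by
  apply Real.tendsto_harmonic_sub_log.congr
  intro n
  rw [gb3_H_eq_harmonic]

lemma gb3_err_bounds (N : ℕ) (h : 1 ≤ N) :
    0 ≤ gb3H N - Real.log N - eulerMascheroniConstant ∧
    gb3H N - Real.log N - eulerMascheroniConstant ≤ 1/(N:ℝ) := by
  have hN : (0:ℝ) < N := by exact_mod_cast h
  constructor
  · have := Real.eulerMascheroniConstant_lt_eulerMascheroniSeq' N
    rw [Real.eulerMascheroniSeq'] at this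
    rw [if_neg (by omega : N ≠ 0)] at this
    rw [gb3_H_eq_harmonic]
    linarith
  · have h1 := Real.eulerMascheroniSeq_lt_eulerMascheroniConstant N
    rw [Real.eulerMascheroniSeq] at h1
    have h2 : Real.log (N+1) - Real.log N ≤ 1/(N:ℝ) := by
      rw [← Real.log_div (by positivity) (by positivity)]
      have := Real.log_le_sub_one_of_pos (show (0:ℝ) < ((N:ℝ)+1)/N by positivity)
      calc Real.log (((N:ℝ)+1)/N) ≤ ((N:ℝ)+1)/N - 1 := this
        _ = 1/(N:ℝ) := by field_simp; ring
    rw [gb3_H_eq_harmonic]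
    linarith

noncomputable def gb3u (J : ℕ) : ℝ :=
  gb3H (3^J) - J * Real.log 3 - eulerMascheroniConstant

lemma gb3_u_bounds (J : ℕ) : 0 ≤ gb3u J ∧ gb3u J ≤ (1/3:ℝ)^J := by
  have h := gb3_err_bounds (3^J) (Nat.one_le_pow _ _ (by norm_num))
  have hlog : Real.log ((3^J : ℕ):ℝ) = J * Real.log 3 := by
    push_cast
    rw [Real.log_pow]
  have hinv : (1:ℝ)/((3^J:ℕ):ℝ) = (1/3:ℝ)^J := by
    push_cast
    rw [div_pow]
    norm_num
  rw [hlog, hinv] at h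
  exact h

lemma gb3_tendsto_jpow : Tendsto (fun J : ℕ => (J:ℝ) * (1/3:ℝ)^J) atTop (𝓝 0) := by
  have := tendsto_pow_const_mul_const_pow_of_lt_one 1 (by norm_num : (0:ℝ) ≤ 1/3)
    (by norm_num : (1/3:ℝ) < 1)
  simpa using this

lemma gb3_tendsto_A :
    Tendsto (fun J : ℕ => (J:ℝ) * (gb3u J - gb3u (J+1))) atTop (𝓝 0) := by
  apply squeeze_zero_norm _ gb3_tendsto_jpow
  intro J
  have h1 := gb3_u_bounds J
  have h2 := gb3_u_bounds (J+1)
  have h3 : (1/3:ℝ)^(J+1) ≤ (1/3:ℝ)^J := by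
    apply pow_le_pow_of_le_one (by norm_num) (by norm_num) (by omega)
  rw [Real.norm_eq_abs, abs_mul, Nat.abs_cast]
  apply mul_le_mul_of_nonneg_left _ (Nat.cast_nonneg J)
  rw [abs_le]
  constructor <;> nlinarith [h1.1, h1.2, h2.1, h2.2]

lemma gb3_tendsto_B :
    Tendsto (fun J : ℕ => gb3H (3^J) - (J:ℝ) * Real.log 3) atTop (𝓝 eulerMascheroniConstant) := by
  have hp : Tendsto (fun J : ℕ => 3^J) atTop atTop :=
    tendsto_pow_atTop_atTop_of_one_lt (by norm_num)
  have := gb3_tendsto_H_sub_log.comp hp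
  apply this.congr
  intro J
  simp only [Function.comp]
  congr 1
  push_cast
  rw [Real.log_pow]

lemma gb3_tendsto_PS :
    Tendsto (fun J : ℕ => ∑ m ∈ Finset.Ico 1 (3^J), (Nat.log 3 (3*m) : ℝ) * gb3g m)
      atTop (𝓝 (eulerMascheroniConstant - 1/2)) := by
  have hC : Tendsto (fun J : ℕ => (J:ℝ) * (1/3:ℝ)^(J+1)) atTop (𝓝 0) := by
    have := gb3_tendsto_jpow.const_mul (1/3:ℝ)
    rw [mul_zero] at this
    apply this.congr
    intro J
    rw [pow_succ]
    ring
  have hD : Tendsto (fun J : ℕ => (1/2:ℝ) * (1/3:ℝ)^J) atTop (𝓝 0) := by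
    have := (tendsto_pow_atTop_nhds_zero_of_lt_one (by norm_num : (0:ℝ) ≤ 1/3)
      (by norm_num : (1/3:ℝ) < 1)).const_mul (1/2:ℝ)
    rwa [mul_zero] at this
  have hcomb := ((gb3_tendsto_A.add gb3_tendsto_B).sub hC).sub hD
  rw [zero_add, sub_zero, sub_zero] at hcomb
  have hcomb2 := hcomb.sub_const (1/2)
  apply hcomb2.congr
  intro J
  rw [gb3_key, gb3_sumPhi]
  have hH1 : gb3H 1 = 1 := by simp [gb3H]
  have h3 : (3:ℕ)*3^J = 3^(J+1) := by ring
  have hc : ((3^J : ℕ) : ℝ) = 3^J := by push_cast; ring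
  have hinv : (1:ℝ)/(3*((3^J:ℕ):ℝ)) = (1/3:ℝ)^(J+1) := by
    rw [hc, div_eq_iff (by positivity), pow_succ]
    field_simp
    rw [← mul_pow]; norm_num
  rw [gb3Phi, h3, hinv, hH1]
  simp only [gb3u]
  push_cast
  ring


lemma gb3g_eq_frac (n : ℕ) : gb3g (n+1) =
    (12 * ((n : ℝ) + 1) + 6) /
      (3 * ((n : ℝ) + 1) * (3 * ((n : ℝ) + 1) + 1) * (3 * ((n : ℝ) + 1) + 2) *
        (3 * ((n : ℝ) + 1) + 3)) := by
  have hx : (0:ℝ) < (n:ℝ) + 1 := by positivity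
  rw [gb3g]
  push_cast
  field_simp
  ring

lemma gb3g_nonneg (n : ℕ) : 0 ≤ gb3g (n+1) := by
  rw [gb3g_eq_frac]
  positivity

lemma gb3_term_eq (n : ℕ) :
    (⌊Real.log (3 * ((n : ℝ) + 1)) / Real.log 3⌋ : ℝ) * (12 * ((n : ℝ) + 1) + 6) /
        (3 * ((n : ℝ) + 1) * (3 * ((n : ℝ) + 1) + 1) * (3 * ((n : ℝ) + 1) + 2) *
          (3 * ((n : ℝ) + 1) + 3))
      = (Nat.log 3 (3*(n+1)) : ℝ) * gb3g (n+1) := by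
  have hfl : ⌊Real.log (3 * ((n : ℝ) + 1)) / Real.log 3⌋ = (Nat.log 3 (3*(n+1)) : ℤ) := by
    have h1 : (3 : ℝ) * ((n : ℝ) + 1) = ((3*(n+1) : ℕ) : ℝ) := by push_cast; ring
    rw [Real.log_div_log, h1]
    rw [show ((3:ℝ)) = ((3:ℕ):ℝ) by norm_num]
    rw [Real.floor_logb_natCast (Nat.cast_nonneg _), Int.log_natCast]
  rw [hfl, gb3g_eq_frac]
  push_cast
  ring

lemma gb3_sum_range_eq (N : ℕ) :
    ∑ i ∈ Finset.range N, (Nat.log 3 (3*(i+1)) : ℝ) * gb3g (i+1)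
      = ∑ m ∈ Finset.Ico 1 (N+1), (Nat.log 3 (3*m) : ℝ) * gb3g m := by
  rw [Finset.sum_Ico_eq_sum_range]
  simp only [Nat.add_sub_cancel]
  apply Finset.sum_congr rfl
  intro i _
  rw [add_comm 1 i]

lemma gb3_PS_mono : Monotone (fun J : ℕ =>
    ∑ m ∈ Finset.Ico 1 (3^J), (Nat.log 3 (3*m) : ℝ) * gb3g m) := by
  intro J1 J2 h
  apply Finset.sum_le_sum_of_subset_of_nonneg
  · exact Finset.Ico_subset_Ico_right (Nat.pow_le_pow_right (by norm_num) h)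
  · intro m hm _
    rw [Finset.mem_Ico] at hm
    obtain ⟨k, rfl⟩ := Nat.exists_eq_add_of_le hm.1
    rw [add_comm 1 k]
    exact mul_nonneg (Nat.cast_nonneg _) (gb3g_nonneg k)

lemma gb3_summable : Summable (fun n : ℕ => (Nat.log 3 (3*(n+1)) : ℝ) * gb3g (n+1)) := by
  apply summable_of_sum_range_le (c := eulerMascheroniConstant - 1/2)
  · intro n
    exact mul_nonneg (Nat.cast_nonneg _) (gb3g_nonneg n)
  · intro n
    rw [gb3_sum_range_eq]
    have h1 : ∑ m ∈ Finset.Ico 1 (n+1), (Nat.log 3 (3*m) : ℝ) * gb3g m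
        ≤ ∑ m ∈ Finset.Ico 1 (3^n), (Nat.log 3 (3*m) : ℝ) * gb3g m := by
      apply Finset.sum_le_sum_of_subset_of_nonneg
      · apply Finset.Ico_subset_Ico_right
        have := Nat.lt_pow_self (a := 3) (n := n) (by norm_num)
        omega
      · intro m hm _
        rw [Finset.mem_Ico] at hm
        obtain ⟨k, rfl⟩ := Nat.exists_eq_add_of_le hm.1
        rw [add_comm 1 k]
        exact mul_nonneg (Nat.cast_nonneg _) (gb3g_nonneg k)
    exact h1.trans (gb3_PS_mono.ge_of_tendsto gb3_tendsto_PS n)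

lemma gb3_tsum : ∑' n : ℕ, (Nat.log 3 (3*(n+1)) : ℝ) * gb3g (n+1)
    = eulerMascheroniConstant - 1/2 := by
  have hs := gb3_summable
  have ht := hs.hasSum.tendsto_sum_nat
  have hpow : Tendsto (fun J : ℕ => 3^J - 1) atTop atTop := by
    apply tendsto_atTop_mono _ tendsto_id
    intro J
    show J ≤ 3^J - 1
    have := Nat.lt_pow_self (a := 3) (n := J) (by norm_num)
    omega
  have ht2 := ht.comp hpow
  have ht3 : Tendsto (fun J : ℕ =>
      ∑ m ∈ Finset.Ico 1 (3^J), (Nat.log 3 (3*m) : ℝ) * gb3g m) atTop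
      (𝓝 (∑' n : ℕ, (Nat.log 3 (3*(n+1)) : ℝ) * gb3g (n+1))) := by
    apply ht2.congr
    intro J
    simp only [Function.comp]
    have h1 : (3:ℕ)^J - 1 + 1 = 3^J := by
      have : (1:ℕ) ≤ 3^J := Nat.one_le_pow _ _ (by norm_num)
      omega
    rw [gb3_sum_range_eq, h1]
  exact tendsto_nhds_unique ht3 gb3_tendsto_PS

/-- `γ = 1/2 + ∑_{n=1}^∞ ⌊log₃(3n)⌋ (12n+6) / (3n(3n+1)(3n+2)(3n+3))`. -/
theorem gamma_eq_base_three_addison_series :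
    Real.eulerMascheroniConstant = 1 / 2 + ∑' n : ℕ,
      (⌊Real.log (3 * ((n : ℝ) + 1)) / Real.log 3⌋ : ℝ) * (12 * ((n : ℝ) + 1) + 6) /
        (3 * ((n : ℝ) + 1) * (3 * ((n : ℝ) + 1) + 1) * (3 * ((n : ℝ) + 1) + 2) *
          (3 * ((n : ℝ) + 1) + 3)) := by
  rw [tsum_congr gb3_term_eq, gb3_tsum]
  ring
end

section
/- ln(4/π) = Σ_{n=1}^∞ (-1)^{n−1} (1/n − ln((n+1)/n)), where the series converges. -/
open Real Filter

private noncomputable def altTerm (n : ℕ) : ℝ :=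
  (-1 : ℝ) ^ (n - 1) * (1 / (n : ℝ) - Real.log (((n : ℝ) + 1) / (n : ℝ)))

private noncomputable def altSum (N : ℕ) : ℝ := ∑ n ∈ Finset.Icc 1 N, altTerm n

private lemma tendsto_of_even_odd {f : ℕ → ℝ} {L : ℝ}
    (he : Tendsto (fun k => f (2 * k)) atTop (nhds L))
    (ho : Tendsto (fun k => f (2 * k + 1)) atTop (nhds L)) :
    Tendsto f atTop (nhds L) := by
  rw [Metric.tendsto_atTop] at he ho ⊢
  intro ε hε
  obtain ⟨N1, h1⟩ := he ε hε
  obtain ⟨N2, h2⟩ := ho ε hε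
  refine ⟨2 * max N1 N2, fun n hn => ?_⟩
  rcases Nat.even_or_odd n with ⟨k, hk⟩ | ⟨k, hk⟩
  · subst hk
    have : max N1 N2 ≤ k := by omega
    simpa [two_mul] using h1 k (le_trans (le_max_left _ _) this)
  · subst hk
    have : max N1 N2 ≤ k := by omega
    simpa using h2 k (le_trans (le_max_right _ _) this)

private lemma altSum_even (k : ℕ) :
    altSum (2 * k) = ((harmonic (2 * k) : ℝ) - (harmonic k : ℝ)) - Real.log (Real.Wallis.W k) := by
  induction k with
  | zero => simp [altSum, Real.Wallis.W]
  | succ k ih =>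
    have h2k1 : (0 : ℝ) < 2 * k + 1 := by positivity
    have h2k2 : (0 : ℝ) < 2 * k + 2 := by positivity
    have h2k3 : (0 : ℝ) < 2 * k + 3 := by positivity
    have hs : altSum (2 * (k + 1)) = altSum (2 * k) + altTerm (2 * k + 1) + altTerm (2 * k + 2) := by
      have : 2 * (k + 1) = (2 * k + 1) + 1 := by ring
      rw [this, altSum, Finset.sum_Icc_succ_top (by omega), Finset.sum_Icc_succ_top (by omega)]
      rfl
    rw [hs, ih, Real.Wallis.W_succ, Real.log_mul (ne_of_gt (Real.Wallis.W_pos k))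
      (by positivity), Real.log_mul (by positivity) (by positivity)]
    have ht1 : altTerm (2 * k + 1) = 1 / (2 * (k : ℝ) + 1) - Real.log ((2 * k + 2) / (2 * k + 1)) := by
      have hpow : (-1 : ℝ) ^ (2 * k + 1 - 1) = 1 := by
        simp [pow_mul]
      simp only [altTerm, hpow, one_mul]
      push_cast
      ring_nf
    have ht2 : altTerm (2 * k + 2) = -(1 / (2 * (k : ℝ) + 2)) + Real.log ((2 * k + 3) / (2 * k + 2)) := by
      have hpow : (-1 : ℝ) ^ (2 * k + 2 - 1) = -1 := by
        have : 2 * k + 2 - 1 = 2 * k + 1 := by omega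
        rw [this, pow_succ, pow_mul]
        simp
      simp only [altTerm, hpow]
      push_cast
      ring_nf
    have hlog3 : Real.log ((2 * (k : ℝ) + 3) / (2 * k + 2)) =
        - Real.log ((2 * (k : ℝ) + 2) / (2 * k + 3)) := by
      rw [← Real.log_inv, inv_div]
    have hh2 : (harmonic (2 * (k + 1)) : ℝ) =
        (harmonic (2 * k) : ℝ) + 1 / (2 * (k : ℝ) + 1) + 1 / (2 * (k : ℝ) + 2) := by
      have : 2 * (k + 1) = (2 * k + 1) + 1 := by ring
      rw [this, harmonic_succ, harmonic_succ]
      push_cast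
      ring
    have hh1 : (harmonic (k + 1) : ℝ) = (harmonic k : ℝ) + 1 / ((k : ℝ) + 1) := by
      rw [harmonic_succ]; push_cast; ring
    rw [ht1, ht2, hlog3, hh2, hh1]
    have : 1 / ((k : ℝ) + 1) = 2 / (2 * (k : ℝ) + 2) := by
      rw [div_eq_div_iff (by positivity) (by positivity)]; ring
    rw [this]
    ring

private lemma tendsto_even : Tendsto (fun k => altSum (2 * k)) atTop
    (nhds (Real.log (4 / Real.pi))) := by
  have hW : Tendsto (fun k => Real.log (Real.Wallis.W k)) atTop (nhds (Real.log (Real.pi / 2))) :=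
    ((Real.continuousAt_log (by positivity)).tendsto).comp Real.Wallis.tendsto_W_nhds_pi_div_two
  have h2 : Tendsto (fun k : ℕ => 2 * k) atTop atTop :=
    Filter.tendsto_atTop_atTop.mpr (fun b => ⟨b, fun a ha => by omega⟩)
  have hg := Real.tendsto_harmonic_sub_log
  have hH : Tendsto (fun k => (harmonic (2 * k) : ℝ) - (harmonic k : ℝ)) atTop
      (nhds (Real.log 2)) := by
    have h1 : Tendsto (fun k : ℕ => ((harmonic (2 * k) : ℝ) - Real.log ((2 * k : ℕ) : ℝ)) -
        ((harmonic k : ℝ) - Real.log k) + Real.log 2) atTop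
        (nhds (Real.eulerMascheroniConstant - Real.eulerMascheroniConstant + Real.log 2)) :=
      (Tendsto.sub (hg.comp h2) hg).add tendsto_const_nhds
    rw [show Real.eulerMascheroniConstant - Real.eulerMascheroniConstant + Real.log 2
        = Real.log 2 by ring] at h1
    apply h1.congr'
    filter_upwards [eventually_ge_atTop 1] with k hk
    have hk0 : (0 : ℝ) < k := by exact_mod_cast hk
    have : Real.log (2 * (k : ℕ) : ℕ) = Real.log 2 + Real.log k := by
      push_cast
      rw [Real.log_mul two_ne_zero (ne_of_gt hk0)]
    rw [this]
    ring
  have := hH.sub hW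
  have heq : Real.log 2 - Real.log (Real.pi / 2) = Real.log (4 / Real.pi) := by
    rw [show (4 : ℝ) / Real.pi = 2 / (Real.pi / 2) by
      rw [div_eq_div_iff Real.pi_ne_zero (by positivity)]; ring]
    rw [Real.log_div two_ne_zero (by positivity)]
  rw [heq] at this
  exact this.congr fun k => (altSum_even k).symm

/-- `ln(4/π) = ∑_{n=1}^∞ (-1)^{n-1} (1/n - ln((n+1)/n))`. -/
theorem log_four_div_pi_eq_alternating_series :
    Tendsto (fun N : ℕ => ∑ n ∈ Finset.Icc 1 N,
        (-1 : ℝ) ^ (n - 1) * (1 / (n : ℝ) - Real.log (((n : ℝ) + 1) / (n : ℝ))))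
      atTop (nhds (Real.log (4 / Real.pi))) := by
  have key : Tendsto altSum atTop (nhds (Real.log (4 / Real.pi))) := by
    apply tendsto_of_even_odd tendsto_even
    have hterm : Tendsto (fun k : ℕ => altTerm (2 * k + 1)) atTop (nhds 0) := by
      have h1 : Tendsto (fun k : ℕ => 1 / (2 * (k : ℝ) + 1)) atTop (nhds 0) := by
        apply tendsto_const_nhds.div_atTop
        exact Filter.Tendsto.atTop_add (tendsto_natCast_atTop_atTop.const_mul_atTop two_pos)
          tendsto_const_nhds
      have h2 : Tendsto (fun k : ℕ => Real.log ((2 * (k : ℝ) + 2) / (2 * k + 1))) atTop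
          (nhds 0) := by
        have hq : Tendsto (fun k : ℕ => (2 * (k : ℝ) + 2) / (2 * k + 1)) atTop (nhds 1) := by
          have : ∀ k : ℕ, (2 * (k : ℝ) + 2) / (2 * k + 1) = 1 + 1 / (2 * k + 1) := by
            intro k
            have : (2 * (k : ℝ) + 1) ≠ 0 := by positivity
            field_simp
            ring
          simp_rw [this]
          simpa using tendsto_const_nhds.add h1
        have := ((Real.continuousAt_log (by norm_num : (1:ℝ) ≠ 0)).tendsto).comp hq
        simpa [Function.comp_def] using this
      have : Tendsto (fun k : ℕ =>
          1 / (2 * (k : ℝ) + 1) - Real.log ((2 * (k : ℝ) + 2) / (2 * k + 1))) atTop (nhds 0) := by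
        simpa using h1.sub h2
      apply this.congr
      intro k
      have hpow : (-1 : ℝ) ^ (2 * k + 1 - 1) = 1 := by simp [pow_mul]
      simp only [altTerm, hpow, one_mul]
      push_cast
      ring_nf
    have : Tendsto (fun k => altSum (2 * k) + altTerm (2 * k + 1)) atTop
        (nhds (Real.log (4 / Real.pi) + 0)) := tendsto_even.add hterm
    rw [add_zero] at this
    apply this.congr
    intro k
    rw [altSum, altSum, Finset.sum_Icc_succ_top (by omega)]
  exact key
end

section
/- Let A_n = 1/n − ln((n+1)/n) and Δ⁺(n) = N₁(n) + N₀(n), where N₁(n) and N₀(n) count the ones and zeros in the binary expansion of n. Then for every positive integer k, Σ_{n=1}^{2^k−1} A_n = Σ_{n=1}^{2^k−1} Δ⁺(n)/(2n(2n+1)) + Σ_{n=2^{k−1}}^{2^k−1} Δ⁺(n) A_n. -/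
open Real

/-- `A n = 1/n - ln((n+1)/n)`. -/
noncomputable def A (n : ℕ) : ℝ := 1 / (n : ℝ) - Real.log (((n : ℝ) + 1) / (n : ℝ))

lemma D_even (n : ℕ) (hn : 1 ≤ n) :
    N1 (2 * n) + N0 (2 * n) = (N1 n + N0 n) + 1 := by
  have h : Nat.digits 2 (2 * n) = 0 :: Nat.digits 2 n := by
    rw [Nat.digits_def' (by norm_num) (by omega)]
    congr 1
    · omega
    · congr 1; omega
  unfold N1 N0
  rw [h]
  simp [List.count_cons]
  omega

lemma D_odd (n : ℕ) :
    N1 (2 * n + 1) + N0 (2 * n + 1) = (N1 n + N0 n) + 1 := by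
  have h : Nat.digits 2 (2 * n + 1) = 1 :: Nat.digits 2 n := by
    rw [Nat.digits_def' (by norm_num) (by omega)]
    congr 1
    · omega
    · congr 1; omega
  unfold N1 N0
  rw [h]
  simp [List.count_cons]
  omega

lemma A_split (n : ℕ) (hn : 1 ≤ n) :
    A n = A (2 * n) + A (2 * n + 1) + 1 / (2 * (n : ℝ) * (2 * (n : ℝ) + 1)) := by
  have hx : (0 : ℝ) < n := by exact_mod_cast hn
  unfold A
  push_cast
  rw [Real.log_div (by positivity) (by positivity),
      Real.log_div (by positivity) (by positivity),
      Real.log_div (by positivity) (by positivity)]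
  have h1 : Real.log (2 * (n : ℝ) + 1 + 1) = Real.log 2 + Real.log ((n : ℝ) + 1) := by
    rw [← Real.log_mul (by norm_num) (by positivity)]; ring_nf
  have h2 : Real.log (2 * (n : ℝ)) = Real.log 2 + Real.log (n : ℝ) := by
    rw [← Real.log_mul (by norm_num) (by positivity)]
  rw [h1, h2]
  field_simp
  ring

lemma sum_pair (f : ℕ → ℝ) {a b : ℕ} (h : a ≤ b) :
    ∑ m ∈ Finset.Ico (2 * a) (2 * b), f m
      = ∑ n ∈ Finset.Ico a b, (f (2 * n) + f (2 * n + 1)) := by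
  induction b, h using Nat.le_induction with
  | base => simp
  | succ b hb ih =>
    rw [Finset.sum_Ico_succ_top hb]
    have h1 : 2 * (b + 1) = (2 * b + 1) + 1 := by ring
    rw [h1, Finset.sum_Ico_succ_top (by omega), Finset.sum_Ico_succ_top (by omega), ih]
    ring

lemma key (k : ℕ) (hk : 1 ≤ k) :
    ∑ n ∈ Finset.Ico 1 (2 ^ k), A n =
      ∑ n ∈ Finset.Ico 1 (2 ^ (k - 1)),
        ((N1 n + N0 n : ℕ) : ℝ) / (2 * (n : ℝ) * (2 * (n : ℝ) + 1)) +
      ∑ n ∈ Finset.Ico (2 ^ (k - 1)) (2 ^ k), ((N1 n + N0 n : ℕ) : ℝ) * A n := by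
  induction k, hk using Nat.le_induction with
  | base =>
    have h1 : Finset.Ico 1 (2 ^ 1) = {1} := rfl
    have h0 : Finset.Ico 1 (2 ^ (1 - 1)) = ∅ := rfl
    have hN : N1 1 = 1 ∧ N0 1 = 0 := by constructor <;> simp [N1, N0]
    rw [h1, h0]
    simp [hN.1, hN.2]
  | succ k hk ih =>
    have h2k : (1 : ℕ) ≤ 2 ^ (k - 1) := Nat.one_le_two_pow
    have hle : (2 : ℕ) ^ (k - 1) ≤ 2 ^ k := Nat.pow_le_pow_right (by norm_num) (by omega)
    have hle2 : (2 : ℕ) ^ k ≤ 2 ^ (k + 1) := Nat.pow_le_pow_right (by norm_num) (by omega)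
    simp only [Nat.add_sub_cancel]
    rw [← Finset.sum_Ico_consecutive A (by omega : 1 ≤ 2 ^ k) hle2, ih,
        ← Finset.sum_Ico_consecutive _ (by omega : 1 ≤ 2 ^ (k - 1)) hle]
    have hp : (2 : ℕ) ^ (k + 1) = 2 * 2 ^ k := by ring
    have hp2 : (2 : ℕ) ^ k = 2 * 2 ^ (k - 1) := by
      conv_lhs => rw [show k = (k - 1) + 1 by omega]
      ring
    have eA : ∀ f : ℕ → ℝ, ∑ m ∈ Finset.Ico (2 ^ k) (2 ^ (k + 1)), f m
        = ∑ n ∈ Finset.Ico (2 ^ (k - 1)) (2 ^ k), (f (2 * n) + f (2 * n + 1)) := by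
      intro f
      rw [hp, hp2, sum_pair f (by omega)]
    simp only [eA]
    rw [add_assoc, add_assoc, ← Finset.sum_add_distrib, ← Finset.sum_add_distrib]
    congr 1
    apply Finset.sum_congr rfl
    intro n hn
    have hn1 : 1 ≤ n := by
      have := (Finset.mem_Ico.mp hn).1; omega
    have h1 := D_even n hn1
    have h2 := D_odd n
    rw [A_split n hn1, h1, h2]
    push_cast
    ring

/-- Partial-sum identity for the series `∑ A_n` in terms of `Δ⁺(n) = N₁(n) + N₀(n)`. -/
theorem partial_sum_identity_plus (k : ℕ) (hk : 1 ≤ k) :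
    ∑ n ∈ Finset.Icc 1 (2 ^ k - 1), A n =
      ∑ n ∈ Finset.Icc 1 (2 ^ (k - 1) - 1),
        ((N1 n + N0 n : ℕ) : ℝ) / (2 * (n : ℝ) * (2 * (n : ℝ) + 1)) +
      ∑ n ∈ Finset.Icc (2 ^ (k - 1)) (2 ^ k - 1), ((N1 n + N0 n : ℕ) : ℝ) * A n := by
  have e : ∀ a j : ℕ, Finset.Icc a (2 ^ j - 1) = Finset.Ico a (2 ^ j) := by
    intro a j
    rw [← Finset.Ico_add_one_right_eq_Icc]
    congr 1
    have : (1 : ℕ) ≤ 2 ^ j := Nat.one_le_two_pow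
    omega
  rw [e, e, e]
  exact key k hk
end

section
/- Let A_n = 1/n − ln((n+1)/n) and Δ⁻(n) = N₁(n) − N₀(n), where N₁(n) and N₀(n) count the ones and zeros in the binary expansion of n. Then for every positive integer k, Σ_{n=1}^{2^k−1} (−1)^{n−1} A_n = Σ_{n=1}^{2^k−1} Δ⁻(n)/(2n(2n+1)) + Σ_{n=2^{k−1}}^{2^k−1} Δ⁻(n) A_n. -/
open Real

lemma digits_two_mul (n : ℕ) (hn : 1 ≤ n) : Nat.digits 2 (2*n) = 0 :: Nat.digits 2 n := by
  rw [Nat.digits_def' (by norm_num : 1 < 2) (by omega)]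
  simp [Nat.mul_div_cancel_left, Nat.mul_mod_right]

lemma digits_two_mul_add_one (n : ℕ) : Nat.digits 2 (2*n+1) = 1 :: Nat.digits 2 n := by
  rw [Nat.digits_def' (by norm_num : 1 < 2) (by omega)]
  simp [Nat.add_mul_div_left, Nat.add_mul_mod_self_left]
  omega

lemma D_two_mul (n : ℕ) (hn : 1 ≤ n) :
    (N1 (2*n) : ℝ) - N0 (2*n) = ((N1 n : ℝ) - N0 n) - 1 := by
  unfold N1 N0; rw [digits_two_mul n hn]; simp [List.count_cons]; ring

lemma D_two_mul_add_one (n : ℕ) :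
    (N1 (2*n+1) : ℝ) - N0 (2*n+1) = ((N1 n : ℝ) - N0 n) + 1 := by
  unfold N1 N0; rw [digits_two_mul_add_one n]; simp [List.count_cons]; ring

lemma A_eq (n : ℕ) (hn : 1 ≤ n) :
    A n = 1/(n:ℝ) - (Real.log ((n:ℝ)+1) - Real.log n) := by
  have h0 : (0:ℝ) < n := by exact_mod_cast hn
  unfold A
  rw [Real.log_div (by positivity) (by positivity)]

lemma A_pair (m : ℕ) (hm : 1 ≤ m) :
    A (2*m) + A (2*m+1) = A m - 1/(2*(m:ℝ)*(2*(m:ℝ)+1)) := by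
  have h0 : (0:ℝ) < m := by exact_mod_cast hm
  rw [A_eq m hm, A_eq (2*m) (by omega), A_eq (2*m+1) (by omega)]
  push_cast
  have h1 : Real.log (2*(m:ℝ)) = Real.log 2 + Real.log m := by
    rw [← Real.log_mul (by norm_num) (by positivity)]
  have h2 : Real.log (2*(m:ℝ)+1+1) = Real.log 2 + Real.log ((m:ℝ)+1) := by
    rw [← Real.log_mul (by norm_num) (by positivity)]; ring_nf
  rw [h2, h1]
  have : (2*(m:ℝ))*(2*m+1) ≠ 0 := by positivity
  field_simp
  ring

lemma sum_Ico_two (f : ℕ → ℝ) (a b : ℕ) :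
    ∑ n ∈ Finset.Ico (2*a) (2*b), f n
      = ∑ m ∈ Finset.Ico a b, (f (2*m) + f (2*m+1)) := by
  induction b with
  | zero => simp
  | succ b ih =>
    rcases le_or_gt (b+1) a with h | h
    · rw [Finset.Ico_eq_empty (by omega), Finset.Ico_eq_empty (by omega)]; simp
    · have hab : a ≤ b := by omega
      have : 2*(b+1) = (2*b+1)+1 := by ring
      rw [this, Finset.sum_Ico_succ_top (by omega), Finset.sum_Ico_succ_top (by omega),
        Finset.sum_Ico_succ_top hab, ih]
      ring

lemma neg_pow_even (m : ℕ) : (-1:ℝ)^(2*m+1-1) = 1 := by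
  simp [pow_mul]

lemma neg_pow_odd (m : ℕ) (hm : 1 ≤ m) : (-1:ℝ)^(2*m-1) = -1 := by
  have h : 2*m-1 = 2*(m-1)+1 := by omega
  rw [h, pow_succ, pow_mul]; simp

lemma main_Ico (k : ℕ) (hk : 1 ≤ k) :
    ∑ n ∈ Finset.Ico 1 (2^k), (-1:ℝ)^(n-1) * A n =
      ∑ n ∈ Finset.Ico 1 (2^(k-1)), ((N1 n:ℝ) - (N0 n:ℝ)) / (2*(n:ℝ)*(2*(n:ℝ)+1)) +
      ∑ n ∈ Finset.Ico (2^(k-1)) (2^k), ((N1 n:ℝ) - (N0 n:ℝ)) * A n := by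
  induction k, hk using Nat.le_induction with
  | base =>
    have hd : Nat.digits 2 1 = [1] := by
      rw [show (1:ℕ) = 2*0+1 from rfl, digits_two_mul_add_one]; simp
    norm_num
    simp [N1, N0, hd]
  | succ k hk ih =>
    have h1 : 1 ≤ 2^(k-1) := Nat.one_le_two_pow
    have h2 : 2^(k-1) ≤ 2^k := Nat.pow_le_pow_right (by norm_num) (by omega)
    have h3 : (2:ℕ)^k ≤ 2^(k+1) := Nat.pow_le_pow_right (by norm_num) (by omega)
    have e1 : (2:ℕ)^k = 2*2^(k-1) := by
      rw [← pow_succ']; congr 1; omega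
    have e2 : (2:ℕ)^(k+1) = 2*2^k := by rw [← pow_succ']
    simp only [Nat.add_sub_cancel]
    have splitL : ∑ n ∈ Finset.Ico 1 (2^(k+1)), (-1:ℝ)^(n-1) * A n
        = ∑ n ∈ Finset.Ico 1 (2^k), (-1:ℝ)^(n-1) * A n
          + ∑ n ∈ Finset.Ico (2^k) (2^(k+1)), (-1:ℝ)^(n-1) * A n :=
      (Finset.sum_Ico_consecutive _ (le_trans h1 h2) h3).symm
    have splitR : ∑ n ∈ Finset.Ico 1 (2^k), ((N1 n:ℝ) - (N0 n:ℝ)) / (2*(n:ℝ)*(2*(n:ℝ)+1))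
        = ∑ n ∈ Finset.Ico 1 (2^(k-1)), ((N1 n:ℝ) - (N0 n:ℝ)) / (2*(n:ℝ)*(2*(n:ℝ)+1))
          + ∑ n ∈ Finset.Ico (2^(k-1)) (2^k), ((N1 n:ℝ) - (N0 n:ℝ)) / (2*(n:ℝ)*(2*(n:ℝ)+1)) :=
      (Finset.sum_Ico_consecutive _ h1 h2).symm
    have key : ∑ n ∈ Finset.Ico (2^k) (2^(k+1)),
        ((-1:ℝ)^(n-1) * A n - ((N1 n:ℝ) - (N0 n:ℝ)) * A n)
        = ∑ n ∈ Finset.Ico (2^(k-1)) (2^k),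
        (((N1 n:ℝ) - (N0 n:ℝ)) / (2*(n:ℝ)*(2*(n:ℝ)+1)) - ((N1 n:ℝ) - (N0 n:ℝ)) * A n) := by
      rw [e1, e2, sum_Ico_two]
      rw [← e1]
      apply Finset.sum_congr rfl
      intro m hm
      have hm1 : 1 ≤ m := by
        have := (Finset.mem_Ico.mp hm).1
        omega
      rw [D_two_mul m hm1, D_two_mul_add_one m, neg_pow_even m, neg_pow_odd m hm1]
      have hp := A_pair m hm1
      push_cast
      linear_combination (-((N1 m:ℝ) - (N0 m:ℝ))) * hp
    rw [Finset.sum_sub_distrib, Finset.sum_sub_distrib] at key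
    rw [splitL, splitR]
    linarith

/-- Partial-sum identity for the series `∑ (-1)^{n-1} A_n` in terms of
`Δ⁻(n) = N₁(n) - N₀(n)`. -/
theorem partial_sum_identity_minus (k : ℕ) (hk : 1 ≤ k) :
    ∑ n ∈ Finset.Icc 1 (2 ^ k - 1), (-1 : ℝ) ^ (n - 1) * A n =
      ∑ n ∈ Finset.Icc 1 (2 ^ (k - 1) - 1),
        ((N1 n : ℝ) - (N0 n : ℝ)) / (2 * (n : ℝ) * (2 * (n : ℝ) + 1)) +
      ∑ n ∈ Finset.Icc (2 ^ (k - 1)) (2 ^ k - 1), ((N1 n : ℝ) - (N0 n : ℝ)) * A n := by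
  have hIcc : ∀ a m : ℕ, 1 ≤ m → Finset.Icc a (m - 1) = Finset.Ico a m := by
    intro a m hm
    rw [← Finset.Ico_add_one_right_eq_Icc]; congr 1; omega
  rw [hIcc 1 (2^k) Nat.one_le_two_pow, hIcc 1 (2^(k-1)) Nat.one_le_two_pow,
      hIcc (2^(k-1)) (2^k) Nat.one_le_two_pow]
  exact main_Ico k hk
end

section
/- Let q be an integer with q ≥ 2 and define ε(n) = q − 1 if q divides n and ε(n) = −1 otherwise. Then Euler's constant γ satisfies the generalized Vacca series γ = Σ_{n=1}^∞ ε(n) ⌊log_q n⌋ / n, where the series converges. -/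
open Real Filter Finset

namespace VaccaAux

noncomputable def H (n : ℕ) : ℝ := (harmonic n : ℝ)

lemma H_succ (n : ℕ) : H (n+1) = H n + 1/((n:ℝ)+1) := by
  simp only [H, harmonic_succ]
  push_cast
  ring

noncomputable def S (q : ℕ) (N : ℕ) : ℝ :=
  ∑ n ∈ Finset.Icc 1 N, (if q ∣ n then (q:ℝ)-1 else -1) * (Nat.log q n : ℝ) / n

lemma log_succ_eq_of_ne {q N : ℕ} (hq : 1 < q) (h : q ^ Nat.log q (N+1) ≠ N + 1) :
    Nat.log q (N+1) = Nat.log q N := by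
  rcases Nat.eq_zero_or_pos N with rfl | hN
  · simp
  refine le_antisymm ?_ (Nat.log_mono_right (Nat.le_succ N))
  rw [Nat.le_log_iff_pow_le hq (by omega)]
  have h1 := Nat.pow_log_le_self q (show N+1 ≠ 0 by omega)
  omega

lemma key {q : ℕ} (hq : 2 ≤ q) : ∀ N : ℕ, 1 ≤ N →
    S q N = (Nat.log q N : ℝ) * (H (N/q) - H N) + H (q ^ Nat.log q N - 1) := by
  intro N
  induction N with
  | zero => omega
  | succ N ih =>
    intro _
    have hq1 : 1 < q := hq
    rcases Nat.eq_zero_or_pos N with rfl | hN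
    · rw [S]
      rw [show Finset.Icc 1 1 = {1} from rfl, Finset.sum_singleton,
        Nat.log_one_right, Nat.div_eq_of_lt (by omega : 1 < q), pow_zero]
      simp [H]
    have ihN := ih hN
    have hS : S q (N+1) = S q N +
        (if q ∣ (N+1) then (q:ℝ)-1 else -1) * (Nat.log q (N+1) : ℝ) / ((N:ℝ)+1) := by
      rw [S, S, Finset.sum_Icc_succ_top (by omega)]
      push_cast
      ring
    by_cases hdvd : q ∣ (N+1)
    · by_cases hpow : q ^ Nat.log q (N+1) = N + 1
      · -- N + 1 = q^(k+1)
        set k := Nat.log q N with hk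
        have h4 : N < q ^ (k+1) := Nat.lt_pow_succ_log_self hq1 N
        have h5 : q ^ k ≤ N := Nat.pow_log_le_self q (by omega)
        have hK : Nat.log q (N+1) = k + 1 := by
          have hlt : q ^ k < q ^ Nat.log q (N+1) := by omega
          have hle : q ^ Nat.log q (N+1) ≤ q ^ (k+1) := by omega
          have h1 := (Nat.pow_lt_pow_iff_right hq1).mp hlt
          have h2 := (Nat.pow_le_pow_iff_right hq1).mp hle
          omega
        have hNp : N + 1 = q ^ (k+1) := by rw [← hK]; exact hpow.symm
        have hdivN1 : (N+1)/q = q^k := by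
          rw [hNp, pow_succ, Nat.mul_div_cancel _ (by omega : 0 < q)]
        have hdiv : (N+1)/q = N/q + 1 := by rw [Nat.succ_div, if_pos hdvd]
        have hdivN : N/q = q^k - 1 := by rw [← hdivN1, hdiv, Nat.add_sub_cancel]
        have hqk : 1 ≤ q^k := Nat.one_le_pow _ _ (by omega)
        have hqk1 : 1 ≤ q^(k+1) := Nat.one_le_pow _ _ (by omega)
        rw [hS, ihN, hK, hdivN1, hdivN, if_pos hdvd,
          show q ^ (k+1) - 1 = N from by omega]
        have e1 : H (q^k) = H (q^k - 1) + 1/((q:ℝ)^k) := by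
          have h := H_succ (q^k - 1)
          rw [show q^k - 1 + 1 = q^k from by omega] at h
          rw [h, Nat.cast_sub hqk]
          push_cast
          ring_nf
        have e2 : H (N+1) = H N + 1/((N:ℝ)+1) := H_succ N
        have hNR : (N:ℝ) + 1 = (q:ℝ)^(k+1) := by
          have := congrArg (Nat.cast : ℕ → ℝ) hNp
          push_cast at this
          linarith
        rw [e1, e2, hNR]
        have hq0 : (q:ℝ) ≠ 0 := by positivity
        field_simp
        push_cast
        ring
      · -- same log, divisible
        have hK : Nat.log q (N+1) = Nat.log q N := log_succ_eq_of_ne hq1 hpow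
        have hdiv : (N+1)/q = N/q + 1 := by rw [Nat.succ_div, if_pos hdvd]
        rw [hS, ihN, hK, hdiv, if_pos hdvd, H_succ (N/q), H_succ N]
        obtain ⟨m, hm⟩ := hdvd
        have hm0 : m ≠ 0 := by rintro rfl; simp at hm
        have hm2 : (N+1)/q = m := by
          rw [hm, Nat.mul_div_cancel_left _ (by omega : 0 < q)]
        have hmm : N/q + 1 = m := by rw [← hm2, hdiv]
        have hNq : N/q = m - 1 := Nat.eq_sub_of_add_eq hmm
        have hcast : ((N/q : ℕ) : ℝ) + 1 = ((N:ℝ)+1)/q := by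
          rw [hNq, Nat.cast_sub (by omega)]
          have hmR : ((N:ℝ)+1) = q * m := by exact_mod_cast hm
          rw [hmR]
          field_simp
          push_cast
          ring
        rw [hcast]
        have hN1 : ((N:ℝ)+1) ≠ 0 := by positivity
        have hq0 : (q:ℝ) ≠ 0 := by positivity
        field_simp
        ring
    · have hpow : q ^ Nat.log q (N+1) ≠ N + 1 := by
        intro h
        rcases Nat.eq_zero_or_pos (Nat.log q (N+1)) with h0 | h0
        · rw [h0, pow_zero] at h; omega
        · exact hdvd (h ▸ dvd_pow_self q (by omega))
      have hK : Nat.log q (N+1) = Nat.log q N := log_succ_eq_of_ne hq1 hpow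
      have hdiv : (N+1)/q = N/q := by rw [Nat.succ_div, if_neg hdvd, Nat.add_zero]
      rw [hS, ihN, hK, hdiv, if_neg hdvd, H_succ N]
      have hN1 : ((N:ℝ)+1) ≠ 0 := by positivity
      field_simp
      ring

local notation "γ" => Real.eulerMascheroniConstant

lemma gamma_le {n : ℕ} (hn : 1 ≤ n) : γ ≤ H n - Real.log n := by
  have h := Real.eulerMascheroniConstant_lt_eulerMascheroniSeq' n
  rw [Real.eulerMascheroniSeq', if_neg (by omega)] at h
  exact h.le

lemma le_gamma_add {n : ℕ} (hn : 1 ≤ n) : H n - Real.log n ≤ γ + 1/n := by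
  have h1 := (Real.eulerMascheroniSeq_lt_eulerMascheroniConstant n).le
  rw [Real.eulerMascheroniSeq] at h1
  have hn0 : (0:ℝ) < n := by exact_mod_cast hn
  have h2 : Real.log ((n:ℝ)+1) - Real.log n ≤ 1/n := by
    rw [← Real.log_div (by positivity) (by positivity)]
    have h3 := Real.log_le_sub_one_of_pos (show (0:ℝ) < ((n:ℝ)+1)/n by positivity)
    have h4 : ((n:ℝ)+1)/n - 1 = 1/n := by field_simp; ring
    linarith
  have hH : H n = (harmonic n : ℝ) := rfl
  linarith [h1, h2]

lemma tendsto_natLog {q : ℕ} (hq : 2 ≤ q) : Tendsto (Nat.log q) atTop atTop := by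
  apply tendsto_atTop_atTop.mpr
  intro b
  refine ⟨q ^ b, fun a ha => ?_⟩
  have h1 : 1 ≤ q ^ b := Nat.one_le_pow _ _ (by omega)
  rw [Nat.le_log_iff_pow_le (by omega) (by omega)]
  exact ha

set_option maxHeartbeats 1000000 in
lemma main_bound {q : ℕ} (hq : 2 ≤ q) {N : ℕ} (hN : q ≤ N) :
    |S q N - γ| ≤ 8 * q * ((Nat.log q N : ℝ) + 1) / (q:ℝ) ^ (Nat.log q N) := by
  set k := Nat.log q N with hk
  set M := N / q with hM
  have hN1 : 1 ≤ N := by omega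
  have hk1 : 1 ≤ k := by
    rw [hk, Nat.le_log_iff_pow_le (by omega : 1 < q) (by omega)]
    simpa using hN
  have hNk : q ^ k ≤ N := Nat.pow_log_le_self q (by omega)
  have hqqk : q ≤ q ^ k := Nat.le_self_pow (by omega) q
  have hqk2 : 2 ≤ q ^ k := by omega
  have hM1 : q ^ (k-1) ≤ M := by
    rw [hM, Nat.le_div_iff_mul_le (by omega : 0 < q), ← pow_succ]
    rw [show k - 1 + 1 = k from by omega]
    exact hNk
  have hMk : q ^ k ≤ q * M := by
    calc q ^ k = q * q ^ (k-1) := by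
          rw [← pow_succ']
          congr 1
          omega
    _ ≤ q * M := Nat.mul_le_mul_left _ hM1
  have hM0 : 1 ≤ M := le_trans (Nat.one_le_pow _ _ (by omega)) hM1
  have hMN : M ≤ N := Nat.div_le_self _ _
  have hqMN : q * M ≤ N := by
    rw [hM, mul_comm]
    exact Nat.div_mul_le_self N q
  have hNqM : N < q * M + q := by
    have h1 : N < (N/q + 1) * q :=
      (Nat.div_lt_iff_lt_mul (show 0 < q by omega)).mp (Nat.lt_succ_self (N/q))
    rw [← hM] at h1
    calc N < (M + 1) * q := h1
    _ = q * M + q := by ring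
  -- real versions
  have hP0 : (0:ℝ) < (q:ℝ)^k := by positivity
  have RP2 : (2:ℝ) ≤ (q:ℝ)^k := by exact_mod_cast hqk2
  have RqM : (q:ℝ)^k ≤ (q:ℝ) * M := by exact_mod_cast hMk
  have RqMN : (q:ℝ) * M ≤ N := by exact_mod_cast hqMN
  have RNqM : (N:ℝ) < q * M + q := by exact_mod_cast hNqM
  have RM : (1:ℝ) ≤ M := by exact_mod_cast hM0
  have RMN : (M:ℝ) ≤ N := by exact_mod_cast hMN
  have RN0 : (0:ℝ) < N := by positivity
  have RM0 : (0:ℝ) < M := by linarith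
  have Rkcast : ((q^k - 1 : ℕ):ℝ) = (q:ℝ)^k - 1 := by
    rw [Nat.cast_sub (by omega)]
    push_cast
    ring
  have hqk1 : 1 ≤ q ^ k - 1 := by omega
  -- decomposition
  have e1 : Real.log ((q*M : ℕ) : ℝ) = Real.log q + Real.log M := by
    push_cast
    exact Real.log_mul (by positivity) (by positivity)
  have e2 : Real.log ((q^k : ℕ) : ℝ) = (k:ℝ) * Real.log q := by
    push_cast
    rw [Real.log_pow]
  have hdecomp : S q N - γ =
      ((k:ℝ) * ((H M - Real.log M) - (H N - Real.log N)))
      + ((k:ℝ) * (Real.log ((q*M : ℕ)) - Real.log N))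
      + (Real.log ((q^k - 1 : ℕ)) - Real.log ((q^k : ℕ)))
      + ((H (q^k - 1) - Real.log ((q^k - 1 : ℕ))) - γ) := by
    rw [key hq N hN1, ← hk, ← hM, e1, e2]
    ring
  -- bounds
  have dM1 : γ ≤ H M - Real.log M := gamma_le hM0
  have dM2 : H M - Real.log M ≤ γ + 1/M := le_gamma_add hM0
  have dN1 : γ ≤ H N - Real.log N := gamma_le hN1
  have dN2 : H N - Real.log N ≤ γ + 1/N := le_gamma_add hN1
  have hNM : 1/(N:ℝ) ≤ 1/M := by
    apply one_div_le_one_div_of_le RM0 RMN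
  have h1M : 1/(M:ℝ) ≤ q/((q:ℝ)^k) := by
    rw [div_le_div_iff₀ RM0 hP0]
    nlinarith [RqM]
  have hA : |(k:ℝ) * ((H M - Real.log M) - (H N - Real.log N))| ≤
      2*q*(k:ℝ)/((q:ℝ)^k) := by
    rw [abs_mul, abs_of_nonneg (by positivity : (0:ℝ) ≤ (k:ℝ))]
    have habs : |(H M - Real.log M) - (H N - Real.log N)| ≤ 1/M := by
      rw [abs_le]
      constructor <;> linarith
    calc (k:ℝ) * |(H M - Real.log M) - (H N - Real.log N)| ≤ (k:ℝ) * (1/M) := by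
          apply mul_le_mul_of_nonneg_left habs (by positivity)
    _ ≤ (k:ℝ) * (q/((q:ℝ)^k)) := mul_le_mul_of_nonneg_left h1M (by positivity)
    _ = q*(k:ℝ)/((q:ℝ)^k) := by ring
    _ ≤ 2*q*(k:ℝ)/((q:ℝ)^k) := by
          have h0 : (0:ℝ) ≤ (q:ℝ)*(k:ℝ) := by positivity
          rw [div_le_div_iff₀ hP0 hP0]
          nlinarith [mul_le_mul_of_nonneg_right (by linarith : (q:ℝ)*(k:ℝ) ≤ 2*q*(k:ℝ)) hP0.le]
  have hqM0R : (0:ℝ) < ((q*M : ℕ):ℝ) := by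
    push_cast
    positivity
  have hB : |(k:ℝ) * (Real.log ((q*M : ℕ)) - Real.log N)| ≤ q*(k:ℝ)/((q:ℝ)^k) := by
    have hle : Real.log ((q*M : ℕ)) ≤ Real.log N := by
      apply Real.log_le_log hqM0R
      push_cast
      linarith
    have hstep : Real.log N - Real.log ((q*M : ℕ)) ≤ q/((q:ℝ)^k) := by
      rw [← Real.log_div (by positivity) (by push_cast; positivity)]
      have h3 := Real.log_le_sub_one_of_pos
        (show (0:ℝ) < (N:ℝ)/((q*M:ℕ):ℝ) by positivity)
      have h4 : (N:ℝ)/((q*M:ℕ):ℝ) - 1 ≤ q/((q:ℝ)^k) := by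
        push_cast
        rw [div_sub_one (by positivity), div_le_div_iff₀ (by positivity) hP0]
        have hr : (N:ℝ) - (q:ℝ)*M ≤ q := by linarith
        have h5 : ((N:ℝ) - (q:ℝ)*M) * (q:ℝ)^k ≤ (q:ℝ) * (q:ℝ)^k :=
          mul_le_mul_of_nonneg_right hr hP0.le
        have h6 : (q:ℝ) * ((q:ℝ)^k) ≤ (q:ℝ) * ((q:ℝ)*M) :=
          mul_le_mul_of_nonneg_left RqM (by positivity)
        linarith
      linarith
    rw [abs_mul, abs_of_nonneg (by positivity : (0:ℝ) ≤ (k:ℝ)),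
      abs_of_nonpos (by linarith), neg_sub]
    calc (k:ℝ) * (Real.log N - Real.log ((q*M : ℕ))) ≤ (k:ℝ) * (q/((q:ℝ)^k)) :=
          mul_le_mul_of_nonneg_left hstep (by positivity)
    _ = q*(k:ℝ)/((q:ℝ)^k) := by ring
  have hPm1 : (0:ℝ) < (q:ℝ)^k - 1 := by linarith
  have hinv : 1/((q:ℝ)^k - 1) ≤ 2/((q:ℝ)^k) := by
    rw [div_le_div_iff₀ hPm1 hP0]
    linarith
  have hC : |Real.log ((q^k - 1 : ℕ)) - Real.log ((q^k : ℕ))| ≤ 2/((q:ℝ)^k) := by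
    have hle : Real.log ((q^k - 1 : ℕ)) ≤ Real.log ((q^k : ℕ)) := by
      apply Real.log_le_log (by rw [Rkcast]; linarith)
      rw [Rkcast]
      push_cast
      linarith
    have hstep : Real.log ((q^k : ℕ)) - Real.log ((q^k - 1 : ℕ)) ≤ 1/((q:ℝ)^k - 1) := by
      rw [← Real.log_div (by push_cast; positivity) (by rw [Rkcast]; linarith)]
      have h3 := Real.log_le_sub_one_of_pos
        (show (0:ℝ) < ((q^k:ℕ):ℝ)/((q^k - 1:ℕ):ℝ) by
          rw [Rkcast]; push_cast; positivity)
      have h4 : ((q^k:ℕ):ℝ)/((q^k - 1:ℕ):ℝ) - 1 = 1/((q:ℝ)^k - 1) := by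
        rw [Rkcast]
        push_cast
        field_simp
        ring
      linarith
    rw [abs_of_nonpos (by linarith), neg_sub]
    linarith
  have hD : |(H (q^k - 1) - Real.log ((q^k - 1 : ℕ))) - γ| ≤ 2/((q:ℝ)^k) := by
    have d1 : γ ≤ H (q^k - 1) - Real.log ((q^k - 1 : ℕ)) := gamma_le hqk1
    have d2 : H (q^k - 1) - Real.log ((q^k - 1 : ℕ)) ≤ γ + 1/((q^k - 1 : ℕ)) :=
      le_gamma_add hqk1
    have d3 : (1:ℝ)/((q^k - 1 : ℕ):ℝ) = 1/((q:ℝ)^k - 1) := by rw [Rkcast]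
    rw [abs_le]
    have hP2 : (0:ℝ) < 2 / (q:ℝ)^k := by positivity
    constructor
    · linarith
    · linarith [hinv, d2, d3]
  calc |S q N - γ| = |_ + _ + _ + _| := by rw [hdecomp]
  _ ≤ |((k:ℝ) * ((H M - Real.log M) - (H N - Real.log N)))
      + ((k:ℝ) * (Real.log ((q*M : ℕ)) - Real.log N))
      + (Real.log ((q^k - 1 : ℕ)) - Real.log ((q^k : ℕ)))|
      + |(H (q^k - 1) - Real.log ((q^k - 1 : ℕ))) - γ| := abs_add_le _ _
  _ ≤ |((k:ℝ) * ((H M - Real.log M) - (H N - Real.log N)))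
      + ((k:ℝ) * (Real.log ((q*M : ℕ)) - Real.log N))|
      + |Real.log ((q^k - 1 : ℕ)) - Real.log ((q^k : ℕ))|
      + |(H (q^k - 1) - Real.log ((q^k - 1 : ℕ))) - γ| := by
        gcongr
        exact abs_add_le _ _
  _ ≤ |((k:ℝ) * ((H M - Real.log M) - (H N - Real.log N)))|
      + |((k:ℝ) * (Real.log ((q*M : ℕ)) - Real.log N))|
      + |Real.log ((q^k - 1 : ℕ)) - Real.log ((q^k : ℕ))|
      + |(H (q^k - 1) - Real.log ((q^k - 1 : ℕ))) - γ| := by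
        gcongr
        exact abs_add_le _ _
  _ ≤ 2*q*(k:ℝ)/((q:ℝ)^k) + q*(k:ℝ)/((q:ℝ)^k) + 2/((q:ℝ)^k) + 2/((q:ℝ)^k) := by
        gcongr
  _ ≤ 8 * q * ((k:ℝ) + 1) / (q:ℝ) ^ k := by
        rw [← add_div, ← add_div, ← add_div, div_le_div_iff₀ hP0 hP0]
        have hq2 : (2:ℝ) ≤ q := by exact_mod_cast hq
        have hk0 : (1:ℝ) ≤ (k:ℝ) := by exact_mod_cast hk1
        have hqk' : (2:ℝ) ≤ (q:ℝ)*(k:ℝ) := by nlinarith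
        have hmain : (2*(q:ℝ)*(k:ℝ) + (q:ℝ)*(k:ℝ) + 2 + 2) ≤ 8*(q:ℝ)*((k:ℝ)+1) := by
          nlinarith
        nlinarith [mul_le_mul_of_nonneg_right hmain hP0.le]

end VaccaAux

/-- Generalized Vacca series: `γ = ∑_{n=1}^∞ ε(n) ⌊log_q n⌋ / n`, where `ε(n) = q - 1`
if `q ∣ n` and `ε(n) = -1` otherwise. -/
theorem gamma_eq_generalized_vacca_series (q : ℕ) (hq : 2 ≤ q) :
    Tendsto (fun N : ℕ => ∑ n ∈ Finset.Icc 1 N,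
        (if q ∣ n then (q : ℝ) - 1 else -1) * (⌊Real.log n / Real.log q⌋ : ℝ) / n)
      atTop (nhds Real.eulerMascheroniConstant) := by
  have hconv : ∀ N : ℕ, (∑ n ∈ Finset.Icc 1 N,
      (if q ∣ n then (q : ℝ) - 1 else -1) * (⌊Real.log n / Real.log q⌋ : ℝ) / n)
      = VaccaAux.S q N := by
    intro N
    apply Finset.sum_congr rfl
    intro n hn
    have hn1 : 1 ≤ n := (Finset.mem_Icc.mp hn).1
    have hfl : (⌊Real.log n / Real.log q⌋ : ℝ) = (Nat.log q n : ℝ) := by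
      have h1 : Real.log n / Real.log q = Real.logb q n := rfl
      rw [h1, Real.floor_logb_natCast (Nat.cast_nonneg n), Int.log_natCast]
      simp
    rw [hfl]
  simp only [hconv]
  have hzero : Tendsto (fun N => VaccaAux.S q N - Real.eulerMascheroniConstant)
      atTop (nhds 0) := by
    apply squeeze_zero_norm'
      (a := fun N => 8*(q:ℝ)*((Nat.log q N : ℝ)+1)/(q:ℝ)^(Nat.log q N))
    · filter_upwards [eventually_ge_atTop q] with N hN
      rw [Real.norm_eq_abs]
      exact VaccaAux.main_bound hq hN
    · have houter : Tendsto (fun k : ℕ => 8*(q:ℝ)*((k:ℝ)+1)/(q:ℝ)^k) atTop (nhds 0) := by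
        have hq1 : (1:ℝ) < q := by exact_mod_cast (by omega : 1 < q)
        have t1 := tendsto_pow_const_div_const_pow_of_one_lt 1 hq1
        have t2 : Tendsto (fun n : ℕ => ((1:ℝ)/q)^n) atTop (nhds 0) :=
          tendsto_pow_atTop_nhds_zero_of_lt_one (by positivity)
            (by rw [div_lt_one (by positivity)]; linarith)
        have tt := (t1.const_mul (8*(q:ℝ))).add (t2.const_mul (8*(q:ℝ)))
        simp only [mul_zero, add_zero] at tt
        apply tt.congr
        intro k
        have hP : (q:ℝ)^k ≠ 0 := by positivity
        rw [div_pow, one_pow]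
        field_simp
      exact houter.comp (VaccaAux.tendsto_natLog hq)
  have hfinal := hzero.add_const Real.eulerMascheroniConstant
  simpa using hfinal
end

section
/- Let q be an integer with q ≥ 2. Then Euler's constant γ satisfies γ = Σ_{n=1}^∞ ⌊log_q(qn)⌋ · ((q−1)/(qn) − Σ_{m=1}^{q−1} 1/(qn+m)), and also γ = 1 + Σ_{n=1}^∞ ⌊log_q(qn)⌋ · ((q−1)/(qn+q) − Σ_{m=1}^{q−1} 1/(qn+m)). -/
open Real Filter Finset

noncomputable def vaccaH (n : ℕ) : ℝ := ∑ i ∈ Finset.range n, 1/((i:ℝ)+1)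

lemma vaccaH_eq_harmonic (n : ℕ) : vaccaH n = (harmonic n : ℝ) := by
  rw [vaccaH, harmonic]
  push_cast
  simp [one_div]

lemma vaccaH_Ico {A B : ℕ} (h : A ≤ B) :
    ∑ i ∈ Finset.Ico A B, 1/((i:ℝ)+1) = vaccaH B - vaccaH A := by
  rw [Finset.sum_Ico_eq_sub _ h]; rfl

-- telescoping over Ico
lemma sum_Ico_telescope (W : ℕ → ℝ) {A B : ℕ} (h : A ≤ B) :
    ∑ n ∈ Finset.Ico A B, (W (n+1) - W n) = W B - W A := by
  rw [Finset.sum_Ico_eq_sub _ h, Finset.sum_range_sub, Finset.sum_range_sub]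
  ring

lemma vacca_floor_eq (q : ℕ) (hq : 2 ≤ q) {J k : ℕ} (h1 : q^J ≤ k) (h2 : k < q^(J+1)) :
    ⌊Real.log ((q : ℝ) * k) / Real.log q⌋ = (J : ℤ) + 1 := by
  have hQ1 : (1:ℝ) < (q:ℝ) := by exact_mod_cast hq.trans_lt' one_lt_two
  have hL : 0 < Real.log q := Real.log_pos hQ1
  have hk0 : 0 < k := lt_of_lt_of_le (Nat.pow_pos (by omega) : 0 < q^J) h1
  have hqk : (0:ℝ) < (q:ℝ) * k := by positivity
  have hup : Real.log ((q:ℝ) * k) < ((J:ℝ) + 2) * Real.log q := by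
    have h3 : (q:ℝ) * k < (q:ℝ)^(J+2) := by
      have hk2 : (k:ℝ) < (q:ℝ)^(J+1) := by exact_mod_cast h2
      have hq0 : (0:ℝ) < q := by positivity
      calc (q:ℝ) * k = k * q := mul_comm _ _
        _ < (q:ℝ)^(J+1) * q := mul_lt_mul_of_pos_right hk2 hq0
        _ = (q:ℝ)^(J+2) := (pow_succ _ _).symm
    calc Real.log ((q:ℝ) * k) < Real.log ((q:ℝ)^(J+2)) := Real.log_lt_log hqk h3
      _ = ((J:ℝ) + 2) * Real.log q := by rw [Real.log_pow]; push_cast; ring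
  have hlo : ((J:ℝ) + 1) * Real.log q ≤ Real.log ((q:ℝ) * k) := by
    have h3 : ((q:ℝ))^(J+1) ≤ (q:ℝ) * k := by
      have hk1 : ((q:ℝ))^J ≤ (k:ℝ) := by exact_mod_cast h1
      calc ((q:ℝ))^(J+1) = (q:ℝ) * (q:ℝ)^J := by ring
        _ ≤ (q:ℝ) * k := mul_le_mul_of_nonneg_left hk1 (by positivity)
    calc ((J:ℝ) + 1) * Real.log q = Real.log ((q:ℝ)^(J+1)) := by
          rw [Real.log_pow]; push_cast; ring
      _ ≤ Real.log ((q:ℝ) * k) := Real.log_le_log (by positivity) h3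
  rw [Int.floor_eq_iff]
  refine ⟨?_, ?_⟩
  · push_cast
    rw [le_div_iff₀ hL]
    exact hlo
  · push_cast
    rw [div_lt_iff₀ hL]
    calc Real.log ((q:ℝ) * k) < ((J:ℝ) + 2) * Real.log q := hup
      _ = ((J:ℝ) + 1 + 1) * Real.log q := by ring

lemma vacca_inner (q k : ℕ) (hq : 2 ≤ q) (hk : 1 ≤ k) :
    ∑ m ∈ Finset.Icc 1 (q-1), 1/((q:ℝ)*k + m)
      = (vaccaH (q*k+q-1) - vaccaH (q*k-1)) - 1/((q:ℝ)*k) := by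
  obtain ⟨t, ht⟩ : ∃ t, q*k = t+1 := by
    have : 1 ≤ q * k := Nat.one_le_iff_ne_zero.2 (by positivity)
    exact ⟨q*k - 1, by omega⟩
  have hqk : ((q:ℝ) * k) = (t:ℝ) + 1 := by
    have : ((q*k : ℕ) : ℝ) = ((t+1 : ℕ) : ℝ) := by rw [ht]
    push_cast at this; linarith
  have h1 : q*k+q-1 = t+q := by omega
  have h2 : q*k-1 = t := by omega
  rw [h1, h2, hqk]
  have key : vaccaH (t+q) - vaccaH t
      = (∑ i ∈ Finset.range (q-1), 1/((t:ℝ)+i+2)) + 1/((t:ℝ)+1) := by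
    rw [← vaccaH_Ico (Nat.le_add_right t q), Finset.sum_Ico_eq_sum_range]
    have htq : t + q - t = (q-1)+1 := by omega
    rw [htq, Finset.sum_range_succ']
    congr 1
    · apply Finset.sum_congr rfl
      intro i _
      push_cast
      ring
  have hlhs : ∑ m ∈ Finset.Icc 1 (q-1), 1/((t:ℝ) + 1 + m)
      = ∑ i ∈ Finset.range (q-1), 1/((t:ℝ)+i+2) := by
    rw [← Finset.Ico_add_one_right_eq_Icc, Finset.sum_Ico_eq_sum_range]
    have : q - 1 + 1 - 1 = q - 1 := by omega
    rw [this]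
    apply Finset.sum_congr rfl
    intro i _
    push_cast
    ring
  rw [key, hlhs]
  ring

lemma vacca_term1 (q k : ℕ) (hq : 2 ≤ q) (hk : 1 ≤ k) :
    ((q:ℝ)-1)/((q:ℝ)*k) - ∑ m ∈ Finset.Icc 1 (q-1), 1/((q:ℝ)*k + m)
      = 1/(k:ℝ) - (vaccaH (q*k+q-1) - vaccaH (q*k-1)) := by
  rw [vacca_inner q k hq hk]
  have hk0 : (k:ℝ) ≠ 0 := by positivity
  have hq0 : (q:ℝ) ≠ 0 := by positivity
  field_simp
  ring

noncomputable def vaccaF (q n : ℕ) : ℝ :=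
  (⌊Real.log ((q : ℝ) * ((n : ℝ) + 1)) / Real.log q⌋ : ℝ) *
    (((q : ℝ) - 1) / ((q : ℝ) * ((n : ℝ) + 1)) -
      ∑ m ∈ Finset.Icc 1 (q - 1), 1 / ((q : ℝ) * ((n : ℝ) + 1) + (m : ℝ)))

noncomputable def vaccaG (q n : ℕ) : ℝ :=
  (⌊Real.log ((q : ℝ) * ((n : ℝ) + 1)) / Real.log q⌋ : ℝ) *
    (((q : ℝ) - 1) / ((q : ℝ) * ((n : ℝ) + 1)) -
      ((q : ℝ) - 1) / ((q : ℝ) * ((n : ℝ) + 1) + (q:ℝ)))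

lemma vacca_block_F (q : ℕ) (hq : 2 ≤ q) {J n : ℕ} (h1 : q^J ≤ n+1) (h2 : n+1 < q^(J+1)) :
    vaccaF q n = ((J:ℝ)+1) *
      (1/((n:ℝ)+1) - (vaccaH (q*(n+2)-1) - vaccaH (q*(n+1)-1))) := by
  have hc : (q : ℝ) * ((n : ℝ) + 1) = (q:ℝ) * ((n+1 : ℕ):ℝ) := by push_cast; ring
  have hfl := vacca_floor_eq q hq h1 h2
  have ht := vacca_term1 q (n+1) hq (by omega)
  have hidx : q*(n+1)+q-1 = q*(n+2)-1 := by
    have : q*(n+2) = q*(n+1)+q := by ring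
    omega
  rw [vaccaF, hc, hfl, ht, hidx]
  push_cast
  ring

lemma vacca_block_G (q : ℕ) (hq : 2 ≤ q) {J n : ℕ} (h1 : q^J ≤ n+1) (h2 : n+1 < q^(J+1)) :
    vaccaG q n = ((J:ℝ)+1) * (((q:ℝ)-1)/(q:ℝ)) * (1/((n:ℝ)+1) - 1/((n:ℝ)+2)) := by
  have hc : (q : ℝ) * ((n : ℝ) + 1) = (q:ℝ) * ((n+1 : ℕ):ℝ) := by push_cast; ring
  have hfl := vacca_floor_eq q hq h1 h2
  rw [vaccaG, hc, hfl]
  have hq0 : (q:ℝ) ≠ 0 := by positivity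
  have hn1 : ((n:ℝ)+1) ≠ 0 := by positivity
  have hn2 : ((n:ℝ)+2) ≠ 0 := by positivity
  push_cast
  field_simp
  ring

lemma vacca_F_closed (q : ℕ) (hq : 2 ≤ q) (J : ℕ) :
    ∑ n ∈ Finset.range (q^J - 1), vaccaF q n
      = ((J:ℝ)+1) * vaccaH (q^J - 1) - (J:ℝ) * vaccaH (q^(J+1) - 1) := by
  induction J with
  | zero => simp [vaccaH]
  | succ J IH =>
    have hP : 1 ≤ q^J := Nat.one_le_pow _ _ (by omega)
    have hP1 : 1 ≤ q^(J+1) := Nat.one_le_pow _ _ (by omega)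
    have hPP : q^J ≤ q^(J+1) := Nat.pow_le_pow_right (by omega) (by omega)
    have hAB : q^J - 1 ≤ q^(J+1) - 1 := by omega
    rw [← Finset.sum_range_add_sum_Ico _ hAB, IH]
    have hblock : ∑ n ∈ Finset.Ico (q^J - 1) (q^(J+1) - 1), vaccaF q n
        = ((J:ℝ)+1) * ((vaccaH (q^(J+1)-1) - vaccaH (q^J-1))
            - (vaccaH (q^(J+2)-1) - vaccaH (q^(J+1)-1))) := by
      have hcongr : ∀ n ∈ Finset.Ico (q^J - 1) (q^(J+1) - 1),
          vaccaF q n = ((J:ℝ)+1) *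
            (1/((n:ℝ)+1) - (vaccaH (q*(n+2)-1) - vaccaH (q*(n+1)-1))) := by
        intro n hn
        rw [Finset.mem_Ico] at hn
        exact vacca_block_F q hq (by omega) (by omega)
      rw [Finset.sum_congr rfl hcongr, ← Finset.mul_sum]
      congr 1
      rw [Finset.sum_sub_distrib, vaccaH_Ico hAB,
        sum_Ico_telescope (fun n => vaccaH (q*(n+1)-1)) hAB]
      have e1 : q^J - 1 + 1 = q^J := by omega
      have e2 : q^(J+1) - 1 + 1 = q^(J+1) := by omega
      have e3 : q * q^J = q^(J+1) := by rw [pow_succ, mul_comm]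
      have e4 : q * q^(J+1) = q^(J+2) := by rw [pow_succ q (J+1), mul_comm]
      simp only [e1, e2, e3, e4]
    rw [hblock]
    push_cast
    ring

lemma vacca_G_closed (q : ℕ) (hq : 2 ≤ q) (J : ℕ) :
    ∑ n ∈ Finset.range (q^J - 1), vaccaG q n
      = (1 - (1/(q:ℝ))^J) - (J:ℝ) * (1/(q:ℝ))^J * (((q:ℝ)-1)/(q:ℝ)) := by
  have hq0 : (q:ℝ) ≠ 0 := by positivity
  induction J with
  | zero => simp
  | succ J IH =>
    have hP : 1 ≤ q^J := Nat.one_le_pow _ _ (by omega)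
    have hP1 : 1 ≤ q^(J+1) := Nat.one_le_pow _ _ (by omega)
    have hPP : q^J ≤ q^(J+1) := Nat.pow_le_pow_right (by omega) (by omega)
    have hAB : q^J - 1 ≤ q^(J+1) - 1 := by omega
    rw [← Finset.sum_range_add_sum_Ico _ hAB, IH]
    have hblock : ∑ n ∈ Finset.Ico (q^J - 1) (q^(J+1) - 1), vaccaG q n
        = ((J:ℝ)+1) * (((q:ℝ)-1)/(q:ℝ)) * (1/((q:ℝ)^J) - 1/((q:ℝ)^(J+1))) := by
      have hcongr : ∀ n ∈ Finset.Ico (q^J - 1) (q^(J+1) - 1),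
          vaccaG q n = ((J:ℝ)+1) * (((q:ℝ)-1)/(q:ℝ)) *
            (1/((n:ℝ)+1) - 1/((n:ℝ)+2)) := by
        intro n hn
        rw [Finset.mem_Ico] at hn
        exact vacca_block_G q hq (by omega) (by omega)
      rw [Finset.sum_congr rfl hcongr, ← Finset.mul_sum]
      congr 1
      have htel : ∑ n ∈ Finset.Ico (q^J - 1) (q^(J+1) - 1),
          (1/((n:ℝ)+1) - 1/((n:ℝ)+2))
          = 1/(((q^J - 1 : ℕ):ℝ)+1) - 1/(((q^(J+1) - 1 : ℕ):ℝ)+1) := by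
        have := sum_Ico_telescope (fun n => -(1/((n:ℝ)+1))) hAB
        simp only [neg_sub_neg] at this
        rw [← this]
        apply Finset.sum_congr rfl
        intro n _
        push_cast
        ring
      rw [htel]
      have c1 : ((q^J - 1 : ℕ):ℝ) + 1 = (q:ℝ)^J := by
        have : ((q^J - 1 : ℕ):ℝ) = ((q^J : ℕ):ℝ) - 1 := by
          rw [Nat.cast_sub hP]; norm_num
        rw [this]; push_cast; ring
      have c2 : ((q^(J+1) - 1 : ℕ):ℝ) + 1 = (q:ℝ)^(J+1) := by
        have : ((q^(J+1) - 1 : ℕ):ℝ) = ((q^(J+1) : ℕ):ℝ) - 1 := by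
          rw [Nat.cast_sub hP1]; norm_num
        rw [this]; push_cast; ring
      rw [c1, c2]
    rw [hblock]
    have hqpow : (q:ℝ)^J ≠ 0 := by positivity
    have hqpow1 : (q:ℝ)^(J+1) ≠ 0 := by positivity
    push_cast
    simp only [div_pow, one_pow]
    field_simp
    ring

open Filter in
lemma vacca_hasSum_of_subseq (f : ℕ → ℝ) (hf : ∀ n, 0 ≤ f n) (φ : ℕ → ℕ)
    (hφ : Tendsto φ atTop atTop) {L : ℝ}
    (hlim : Tendsto (fun J => ∑ n ∈ Finset.range (φ J), f n) atTop (nhds L)) :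
    HasSum f L := by
  have hmono : Monotone (fun N => ∑ n ∈ Finset.range N, f n) := fun a b hab =>
    Finset.sum_le_sum_of_subset_of_nonneg (Finset.range_subset_range.2 hab) (fun i _ _ => hf i)
  have hle : ∀ N, ∑ n ∈ Finset.range N, f n ≤ L := by
    intro N
    apply ge_of_tendsto hlim
    filter_upwards [hφ.eventually_ge_atTop N] with J hJ
    exact hmono hJ
  have hsummable : Summable f := summable_of_sum_range_le hf hle
  have h2 : Tendsto (fun J => ∑ n ∈ Finset.range (φ J), f n) atTop (nhds (∑' n, f n)) :=
    hsummable.hasSum.tendsto_sum_nat.comp hφ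
  exact (tendsto_nhds_unique hlim h2) ▸ hsummable.hasSum

lemma vacca_floor_coeff_nonneg (q n : ℕ) (hq : 2 ≤ q) :
    (0:ℝ) ≤ (⌊Real.log ((q : ℝ) * ((n : ℝ) + 1)) / Real.log q⌋ : ℝ) := by
  have hQ1 : (1:ℝ) < (q:ℝ) := by exact_mod_cast hq.trans_lt' one_lt_two
  have hL : 0 < Real.log q := Real.log_pos hQ1
  have harg : (1:ℝ) ≤ (q:ℝ) * ((n:ℝ)+1) := by nlinarith
  have : (0:ℝ) ≤ Real.log ((q : ℝ) * ((n : ℝ) + 1)) := Real.log_nonneg harg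
  exact_mod_cast Int.floor_nonneg.2 (div_nonneg this hL.le)

lemma vaccaF_nonneg (q : ℕ) (hq : 2 ≤ q) (n : ℕ) : 0 ≤ vaccaF q n := by
  apply mul_nonneg (vacca_floor_coeff_nonneg q n hq)
  have hQk : (0:ℝ) < (q:ℝ) * ((n:ℝ)+1) := by positivity
  have hsum : ∑ m ∈ Finset.Icc 1 (q - 1), 1 / ((q : ℝ) * ((n : ℝ) + 1) + (m : ℝ))
      ≤ ((q:ℝ)-1) / ((q:ℝ) * ((n:ℝ)+1)) := by
    have hcard : (Finset.Icc 1 (q - 1)).card = q - 1 := by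
      rw [Nat.card_Icc]; omega
    calc ∑ m ∈ Finset.Icc 1 (q - 1), 1 / ((q : ℝ) * ((n : ℝ) + 1) + (m : ℝ))
        ≤ (Finset.Icc 1 (q-1)).card • (1 / ((q:ℝ) * ((n:ℝ)+1))) := by
          apply Finset.sum_le_card_nsmul
          intro m _
          apply one_div_le_one_div_of_le hQk
          have : (0:ℝ) ≤ (m:ℝ) := Nat.cast_nonneg m
          linarith
      _ = ((q:ℝ)-1) / ((q:ℝ) * ((n:ℝ)+1)) := by
          rw [hcard, nsmul_eq_mul]
          rw [Nat.cast_sub (by omega : 1 ≤ q)]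
          push_cast
          ring
  linarith

lemma vaccaG_nonneg (q : ℕ) (hq : 2 ≤ q) (n : ℕ) : 0 ≤ vaccaG q n := by
  apply mul_nonneg (vacca_floor_coeff_nonneg q n hq)
  have h1 : (0:ℝ) < (q:ℝ) * ((n:ℝ)+1) := by positivity
  have h2 : (0:ℝ) < (q:ℝ) * ((n:ℝ)+1) + (q:ℝ) := by positivity
  have h3 : (0:ℝ) ≤ (q:ℝ) - 1 := by
    have : (1:ℝ) ≤ (q:ℝ) := by exact_mod_cast (by omega : 1 ≤ q)
    linarith
  have hle : ((q:ℝ)-1) / ((q:ℝ)*((n:ℝ)+1) + (q:ℝ)) ≤ ((q:ℝ)-1) / ((q:ℝ)*((n:ℝ)+1)) := by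
    apply div_le_div_of_nonneg_left h3 h1
    linarith
  linarith

lemma vacca_log_le (x : ℝ) (hx : 0 < x) :
    Real.log (x+1) - Real.log x ≤ 1/x := by
  have h1 : Real.log (x+1) - Real.log x = Real.log ((x+1)/x) := by
    rw [Real.log_div (by positivity) (by positivity)]
  rw [h1]
  have := Real.log_le_sub_one_of_pos (show (0:ℝ) < (x+1)/x by positivity)
  have hx' : (x+1)/x - 1 = 1/x := by field_simp; ring
  linarith

lemma vacca_le_log (x : ℝ) (hx : 0 < x) :
    1/(x+1) ≤ Real.log (x+1) - Real.log x := by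
  have h1 : Real.log x - Real.log (x+1) = Real.log (x/(x+1)) := by
    rw [Real.log_div (by positivity) (by positivity)]
  have := Real.log_le_sub_one_of_pos (show (0:ℝ) < x/(x+1) by positivity)
  have hx' : x/(x+1) - 1 = -(1/(x+1)) := by field_simp; ring
  linarith [h1 ▸ this]

lemma vaccaH_sub_le {A B : ℕ} (hA : 1 ≤ A) (hAB : A ≤ B) :
    vaccaH B - vaccaH A ≤ Real.log (B:ℝ) - Real.log (A:ℝ) := by
  rw [← vaccaH_Ico hAB, ← sum_Ico_telescope (fun n => Real.log (n:ℝ)) hAB]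
  apply Finset.sum_le_sum
  intro i hi
  rw [Finset.mem_Ico] at hi
  have hi1 : (0:ℝ) < (i:ℝ) := by exact_mod_cast lt_of_lt_of_le hA hi.1
  have := vacca_le_log (i:ℝ) hi1
  have hc : ((i+1:ℕ):ℝ) = (i:ℝ)+1 := by push_cast; ring
  rw [hc]
  linarith

lemma vacca_le_vaccaH_sub {A B : ℕ} (hAB : A ≤ B) :
    Real.log ((B:ℝ)+1) - Real.log ((A:ℝ)+1) ≤ vaccaH B - vaccaH A := by
  rw [← vaccaH_Ico hAB, ← sum_Ico_telescope (fun n => Real.log ((n:ℝ)+1)) hAB]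
  apply Finset.sum_le_sum
  intro i hi
  have hi1 : (0:ℝ) < (i:ℝ)+1 := by positivity
  have := vacca_log_le ((i:ℝ)+1) hi1
  have hc : ((i+1:ℕ):ℝ) = (i:ℝ)+1 := by push_cast; ring
  rw [hc]
  linarith

lemma vacca_cast_pow_sub_one (q J : ℕ) (hq : 2 ≤ q) :
    ((q^J - 1 : ℕ):ℝ) = (q:ℝ)^J - 1 := by
  have hP : 1 ≤ q^J := Nat.one_le_pow _ _ (by omega)
  rw [Nat.cast_sub hP]
  push_cast
  ring

open Filter in
lemma vacca_phi_tendsto (q : ℕ) (hq : 2 ≤ q) :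
    Tendsto (fun J : ℕ => q^J - 1) atTop atTop := by
  apply tendsto_atTop_mono (f := fun J : ℕ => J)
  · intro J
    have := Nat.lt_pow_self (n := J) (by omega : 1 < q)
    omega
  · exact tendsto_id

open Filter in
lemma vacca_H_pow_tendsto (q : ℕ) (hq : 2 ≤ q) :
    Tendsto (fun J : ℕ => vaccaH (q^J - 1) - (J:ℝ) * Real.log q) atTop
      (nhds Real.eulerMascheroniConstant) := by
  have hQ1 : (1:ℝ) < (q:ℝ) := by exact_mod_cast hq.trans_lt' one_lt_two
  have hQ0 : (0:ℝ) < (q:ℝ) := by linarith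
  have hbase : Tendsto (fun n : ℕ => vaccaH n - Real.log n) atTop
      (nhds Real.eulerMascheroniConstant) := by
    apply Real.tendsto_harmonic_sub_log.congr
    intro n
    rw [vaccaH_eq_harmonic]
  have h1 : Tendsto (fun J : ℕ => vaccaH (q^J - 1) - Real.log ((q^J - 1 : ℕ):ℝ))
      atTop (nhds Real.eulerMascheroniConstant) := hbase.comp (vacca_phi_tendsto q hq)
  have hd : (0:ℝ) ≤ 1/(q:ℝ) := by positivity
  have hd1 : 1/(q:ℝ) < 1 := by rw [div_lt_one hQ0]; linarith
  have h2 : Tendsto (fun J : ℕ => Real.log ((q^J - 1 : ℕ):ℝ) - (J:ℝ) * Real.log q)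
      atTop (nhds 0) := by
    have hpow : Tendsto (fun J : ℕ => 1 - (1/(q:ℝ))^J) atTop (nhds 1) := by
      have := (tendsto_pow_atTop_nhds_zero_of_lt_one hd hd1).const_sub 1
      simpa using this
    have hlog : Tendsto (fun J : ℕ => Real.log (1 - (1/(q:ℝ))^J)) atTop (nhds 0) := by
      have hc : ContinuousAt Real.log 1 := Real.continuousAt_log (by norm_num)
      have := hc.tendsto.comp hpow
      simpa [Function.comp_def] using this
    apply hlog.congr'
    filter_upwards [eventually_ge_atTop 1] with J hJ
    have hdJ : (1/(q:ℝ))^J < 1 := by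
      apply pow_lt_one₀ hd hd1
      omega
    have hQJ : (0:ℝ) < (q:ℝ)^J := by positivity
    have hne : (1:ℝ) - (1/(q:ℝ))^J ≠ 0 := by linarith
    have key : ((q^J - 1 : ℕ):ℝ) = (q:ℝ)^J * (1 - (1/(q:ℝ))^J) := by
      rw [vacca_cast_pow_sub_one q J hq]
      rw [one_div, inv_pow, mul_sub, mul_one, mul_inv_cancel₀ (by positivity)]
    rw [key, Real.log_mul (by positivity) hne, Real.log_pow]
    push_cast
    ring
  have := h1.add h2
  rw [add_zero] at this
  apply this.congr
  intro J
  ring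

open Filter in
lemma vacca_JD_tendsto (q : ℕ) (hq : 2 ≤ q) :
    Tendsto (fun J : ℕ => (J:ℝ) *
      (vaccaH (q^(J+1) - 1) - vaccaH (q^J - 1) - Real.log q)) atTop (nhds 0) := by
  have hQ1 : (1:ℝ) < (q:ℝ) := by exact_mod_cast hq.trans_lt' one_lt_two
  have hQ0 : (0:ℝ) < (q:ℝ) := by linarith
  have hd : (0:ℝ) ≤ 1/(q:ℝ) := by positivity
  have hd1 : 1/(q:ℝ) < 1 := by rw [div_lt_one hQ0]; linarith
  have hub : Tendsto (fun J : ℕ => 2 * ((J:ℝ) * (1/(q:ℝ))^J)) atTop (nhds 0) := by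
    have := (tendsto_self_mul_const_pow_of_lt_one hd hd1).const_mul 2
    simpa using this
  apply tendsto_of_tendsto_of_tendsto_of_le_of_le' tendsto_const_nhds hub
  · -- 0 ≤ J * D_J eventually
    filter_upwards [eventually_ge_atTop 1] with J hJ
    have hP : 1 ≤ q^J := Nat.one_le_pow _ _ (by omega)
    have hP1 : 1 ≤ q^(J+1) := Nat.one_le_pow _ _ (by omega)
    have hPP : q^J ≤ q^(J+1) := Nat.pow_le_pow_right (by omega) (by omega)
    have hAB : q^J - 1 ≤ q^(J+1) - 1 := by omega
    have hlow := vacca_le_vaccaH_sub hAB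
    have c1 : ((q^J - 1 : ℕ):ℝ) + 1 = (q:ℝ)^J := by
      rw [vacca_cast_pow_sub_one q J hq]; ring
    have c2 : ((q^(J+1) - 1 : ℕ):ℝ) + 1 = (q:ℝ)^(J+1) := by
      rw [vacca_cast_pow_sub_one q (J+1) hq]; ring
    rw [c1, c2, Real.log_pow, Real.log_pow] at hlow
    have hD : 0 ≤ vaccaH (q^(J+1) - 1) - vaccaH (q^J - 1) - Real.log q := by
      push_cast at hlow
      nlinarith [Real.log_pos hQ1]
    positivity
  · -- J * D_J ≤ 2 * (J * d^J) eventually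
    filter_upwards [eventually_ge_atTop 1] with J hJ
    have hP : 2 ≤ q^J := by
      calc 2 = 2^1 := by norm_num
        _ ≤ q^J := Nat.pow_le_pow_left hq J |>.trans' (Nat.pow_le_pow_right (by omega) hJ)
    have hP1 : 1 ≤ q^(J+1) := Nat.one_le_pow _ _ (by omega)
    have hPP : q^J ≤ q^(J+1) := Nat.pow_le_pow_right (by omega) (by omega)
    have hA1 : 1 ≤ q^J - 1 := by omega
    have hAB : q^J - 1 ≤ q^(J+1) - 1 := by omega
    have hup := vaccaH_sub_le hA1 hAB
    have c1 : ((q^J - 1 : ℕ):ℝ) = (q:ℝ)^J - 1 := vacca_cast_pow_sub_one q J hq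
    have c2 : ((q^(J+1) - 1 : ℕ):ℝ) = (q:ℝ)^(J+1) - 1 := vacca_cast_pow_sub_one q (J+1) hq
    rw [c1, c2] at hup
    have hQJ2 : (2:ℝ) ≤ (q:ℝ)^J := by exact_mod_cast hP
    have hQJpos : (0:ℝ) < (q:ℝ)^J - 1 := by linarith
    have hQJ1pos : (0:ℝ) < (q:ℝ)^(J+1) - 1 := by
      have : (q:ℝ)^J ≤ (q:ℝ)^(J+1) := pow_le_pow_right₀ (by linarith) (by omega)
      linarith
    -- log bound: log(Q^{J+1}-1) - log(Q^J-1) - log Q ≤ 1/(Q^J-1)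
    have hlog : Real.log ((q:ℝ)^(J+1) - 1) - Real.log ((q:ℝ)^J - 1) - Real.log q
        ≤ 1/((q:ℝ)^J - 1) := by
      have hrat : Real.log ((q:ℝ)^(J+1) - 1) - Real.log ((q:ℝ)^J - 1) - Real.log q
          = Real.log (((q:ℝ)^(J+1) - 1) / (((q:ℝ)^J - 1) * (q:ℝ))) := by
        rw [Real.log_div (by positivity) (by positivity), Real.log_mul (by positivity) (by positivity)]
        ring
      rw [hrat]
      have hpos : (0:ℝ) < ((q:ℝ)^(J+1) - 1) / (((q:ℝ)^J - 1) * (q:ℝ)) := by positivity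
      have := Real.log_le_sub_one_of_pos hpos
      have hineq : ((q:ℝ)^(J+1) - 1) / (((q:ℝ)^J - 1) * (q:ℝ)) - 1 ≤ 1/((q:ℝ)^J - 1) := by
        rw [div_sub_one (by positivity), div_le_div_iff₀ (by positivity) hQJpos]
        have hps : (q:ℝ)^(J+1) = (q:ℝ)^J * q := pow_succ _ _
        nlinarith
      linarith
    have hDub : vaccaH (q^(J+1) - 1) - vaccaH (q^J - 1) - Real.log q ≤ 1/((q:ℝ)^J - 1) :=
      le_trans (by linarith) hlog
    have hstep : 1/((q:ℝ)^J - 1) ≤ 2 * (1/(q:ℝ))^J := by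
      have hQJ0 : (0:ℝ) < (q:ℝ)^J := by positivity
      have hpw : (1/(q:ℝ))^J = 1/((q:ℝ)^J) := by rw [div_pow, one_pow]
      rw [hpw, mul_one_div, div_le_div_iff₀ hQJpos hQJ0]
      nlinarith
    have hJ0 : (0:ℝ) ≤ (J:ℝ) := Nat.cast_nonneg J
    calc (J:ℝ) * (vaccaH (q^(J+1) - 1) - vaccaH (q^J - 1) - Real.log q)
        ≤ (J:ℝ) * (2 * (1/(q:ℝ))^J) := by
          apply mul_le_mul_of_nonneg_left _ hJ0
          linarith
      _ = 2 * ((J:ℝ) * (1/(q:ℝ))^J) := by ring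

open Filter in
lemma vacca_hasSum_F (q : ℕ) (hq : 2 ≤ q) :
    HasSum (vaccaF q) Real.eulerMascheroniConstant := by
  apply vacca_hasSum_of_subseq _ (vaccaF_nonneg q hq) _ (vacca_phi_tendsto q hq)
  have h := (vacca_H_pow_tendsto q hq).sub (vacca_JD_tendsto q hq)
  rw [sub_zero] at h
  apply h.congr
  intro J
  rw [vacca_F_closed q hq J]
  ring

open Filter in
lemma vacca_hasSum_G (q : ℕ) (hq : 2 ≤ q) : HasSum (vaccaG q) 1 := by
  apply vacca_hasSum_of_subseq _ (vaccaG_nonneg q hq) _ (vacca_phi_tendsto q hq)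
  have hQ1 : (1:ℝ) < (q:ℝ) := by exact_mod_cast hq.trans_lt' one_lt_two
  have hQ0 : (0:ℝ) < (q:ℝ) := by linarith
  have hd : (0:ℝ) ≤ 1/(q:ℝ) := by positivity
  have hd1 : 1/(q:ℝ) < 1 := by rw [div_lt_one hQ0]; linarith
  have h1 : Tendsto (fun J : ℕ => 1 - (1/(q:ℝ))^J) atTop (nhds 1) := by
    have := (tendsto_pow_atTop_nhds_zero_of_lt_one hd hd1).const_sub 1
    simpa using this
  have h2 : Tendsto (fun J : ℕ => (J:ℝ) * (1/(q:ℝ))^J * (((q:ℝ)-1)/(q:ℝ)))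
      atTop (nhds 0) := by
    have := (tendsto_self_mul_const_pow_of_lt_one hd hd1).mul_const (((q:ℝ)-1)/(q:ℝ))
    simpa using this
  have h := h1.sub h2
  rw [sub_zero] at h
  apply h.congr
  intro J
  rw [vacca_G_closed q hq J]

/-- The two grouped forms of the generalized Vacca series for Euler's constant. -/
theorem gamma_eq_grouped_vacca_series (q : ℕ) (hq : 2 ≤ q) :
    (Real.eulerMascheroniConstant = ∑' n : ℕ,
      (⌊Real.log ((q : ℝ) * ((n : ℝ) + 1)) / Real.log q⌋ : ℝ) *
        (((q : ℝ) - 1) / ((q : ℝ) * ((n : ℝ) + 1)) -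
          ∑ m ∈ Finset.Icc 1 (q - 1), 1 / ((q : ℝ) * ((n : ℝ) + 1) + (m : ℝ)))) ∧
    Real.eulerMascheroniConstant = 1 + ∑' n : ℕ,
      (⌊Real.log ((q : ℝ) * ((n : ℝ) + 1)) / Real.log q⌋ : ℝ) *
        (((q : ℝ) - 1) / ((q : ℝ) * ((n : ℝ) + 1) + (q : ℝ)) -
          ∑ m ∈ Finset.Icc 1 (q - 1), 1 / ((q : ℝ) * ((n : ℝ) + 1) + (m : ℝ))) := by
  have hF := vacca_hasSum_F q hq
  have hG := vacca_hasSum_G q hq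
  constructor
  · exact hF.tsum_eq.symm
  · have h2 : HasSum (fun n => vaccaF q n - vaccaG q n)
        (Real.eulerMascheroniConstant - 1) := hF.sub hG
    have heq : (fun n : ℕ => vaccaF q n - vaccaG q n)
        = fun n : ℕ => (⌊Real.log ((q : ℝ) * ((n : ℝ) + 1)) / Real.log q⌋ : ℝ) *
          (((q : ℝ) - 1) / ((q : ℝ) * ((n : ℝ) + 1) + (q : ℝ)) -
            ∑ m ∈ Finset.Icc 1 (q - 1), 1 / ((q : ℝ) * ((n : ℝ) + 1) + (m : ℝ))) := by
      funext n
      rw [vaccaF, vaccaG]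
      ring
    rw [heq] at h2
    rw [h2.tsum_eq]
    ring
end
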